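/- arXiv:2601.18232 — 5 statements merged into one kernel-verified Lean document; each statement's English description precedes it below -/
import Mathlib

section
/- Let n ≥ 1 and let θ be an n×n complex matrix. Then the partition sum of the double-edge normal factor graph N_DE(θ) equals |perm(θ)|²; explicitly, ∑_{x, x' ∈ {0,1}^{n×n}} (∏_{i=1}^n [row i of x contains exactly one 1]·[row i of x' contains exactly one 1]) · (∏_{j=1}^n [column j of x contains exactly one 1]·[column j of x' contains exactly one 1]) · ∏_{i,j=1}^n θ_{i,j}^{x_{i,j}} · conj(θ_{i,j})^{x'_{i,j}} = perm(θ) · conj(perm(θ)) = |perm(θ)|², where [·] denotes the Iverson bracket and z^0 := 1, z^1 := z. -/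
open scoped BigOperators
open Finset

lemma perm_matrix_sum (n : ℕ) (f : Fin n → Fin n → ℂ) :
    (∑ x : Fin n → Fin n → Bool,
      (∏ i : Fin n, if (Finset.univ.filter fun j : Fin n => x i j = true).card = 1 then (1 : ℂ) else 0) *
      (∏ j : Fin n, if (Finset.univ.filter fun i : Fin n => x i j = true).card = 1 then (1 : ℂ) else 0) *
      (∏ i : Fin n, ∏ j : Fin n, if x i j = true then f i j else 1))
    = ∑ σ : Equiv.Perm (Fin n), ∏ i, f i (σ i) := by
  classical
  set T : (Fin n → Fin n → Bool) → ℂ := fun x =>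
      (∏ i : Fin n, if (Finset.univ.filter fun j : Fin n => x i j = true).card = 1 then (1 : ℂ) else 0) *
      (∏ j : Fin n, if (Finset.univ.filter fun i : Fin n => x i j = true).card = 1 then (1 : ℂ) else 0) *
      (∏ i : Fin n, ∏ j : Fin n, if x i j = true then f i j else 1) with hT
  set P : (Fin n → Fin n → Bool) → Prop := fun x =>
      (∀ i, (Finset.univ.filter fun j : Fin n => x i j = true).card = 1) ∧
      (∀ j, (Finset.univ.filter fun i : Fin n => x i j = true).card = 1) with hP
  have hzero : ∀ x ∈ Finset.univ, T x ≠ 0 → P x := by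
    intro x _ hx
    by_contra h
    apply hx
    rw [hP] at h
    rcases not_and_or.mp h with h | h
    · push_neg at h
      obtain ⟨i, hi⟩ := h
      have hz : (∏ i : Fin n, if (Finset.univ.filter fun j : Fin n => x i j = true).card = 1 then (1 : ℂ) else 0) = 0 :=
        Finset.prod_eq_zero (Finset.mem_univ i) (if_neg hi)
      simp only [hT, hz, zero_mul]
    · push_neg at h
      obtain ⟨j, hj⟩ := h
      have hz : (∏ j : Fin n, if (Finset.univ.filter fun i : Fin n => x i j = true).card = 1 then (1 : ℂ) else 0) = 0 :=
        Finset.prod_eq_zero (Finset.mem_univ j) (if_neg hj)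
      simp only [hT, hz, mul_zero, zero_mul]
  rw [show (∑ x : Fin n → Fin n → Bool, T x) = ∑ x ∈ Finset.univ.filter P, T x from
    (Finset.sum_filter_of_ne hzero).symm]
  symm
  apply Finset.sum_bij (fun (σ : Equiv.Perm (Fin n)) _ => fun i j => decide (σ i = j))
  · intro σ _
    simp only [Finset.mem_filter, Finset.mem_univ, true_and, hP]
    constructor
    · intro i
      rw [Finset.card_eq_one]
      exact ⟨σ i, by ext j; simp [eq_comm]⟩
    · intro j
      rw [Finset.card_eq_one]
      exact ⟨σ.symm j, by ext i; simp [Equiv.eq_symm_apply, eq_comm]⟩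
  · intro σ₁ _ σ₂ _ h
    apply Equiv.ext
    intro i
    have h2 : σ₂ i = σ₁ i := by
      have := congrFun (congrFun h i) (σ₁ i)
      simpa using this
    exact h2.symm
  · intro x hx
    rw [Finset.mem_filter] at hx
    obtain ⟨-, h1, h2⟩ := hx
    have hg : ∀ i, ∃ a, (Finset.univ.filter fun j : Fin n => x i j = true) = {a} :=
      fun i => Finset.card_eq_one.mp (h1 i)
    choose g hgspec using hg
    have hxg : ∀ i j, x i j = true ↔ j = g i := by
      intro i j
      constructor
      · intro h
        have : j ∈ (Finset.univ.filter fun j : Fin n => x i j = true) := by simp [h]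
        rw [hgspec i] at this; simpa using this
      · rintro rfl
        have : g i ∈ ({g i} : Finset (Fin n)) := Finset.mem_singleton_self _
        rw [← hgspec i] at this; simpa using this
    have hginj : Function.Injective g := by
      intro i₁ i₂ h12
      have c1 : i₁ ∈ (Finset.univ.filter fun i : Fin n => x i (g i₁) = true) := by
        simp [hxg]
      have c2 : i₂ ∈ (Finset.univ.filter fun i : Fin n => x i (g i₁) = true) := by
        simp [hxg, h12]
      have := Finset.card_le_one.mp (le_of_eq (h2 (g i₁))) _ c1 _ c2
      exact this
    refine ⟨Equiv.ofBijective g (Finite.injective_iff_bijective.mp hginj), Finset.mem_univ _, ?_⟩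
    funext i j
    simp only [Equiv.ofBijective_apply]
    rcases eq_or_ne (g i) j with hgj | hgj
    · rw [decide_eq_true hgj]
      exact ((hxg i j).mpr hgj.symm).symm
    · rw [decide_eq_false hgj]
      cases hb' : x i j with
      | false => exact hb'.symm ▸ rfl
      | true => exact (hgj ((hxg i j).mp hb').symm).elim
  · intro σ _
    rw [hT]
    dsimp only
    have r1 : (∏ i : Fin n, if (Finset.univ.filter fun j : Fin n => (decide (σ i = j)) = true).card = 1 then (1 : ℂ) else 0) = 1 := by
      apply Finset.prod_eq_one
      intro i _
      rw [if_pos]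
      rw [Finset.card_eq_one]
      exact ⟨σ i, by ext j; simp [eq_comm]⟩
    have r2 : (∏ j : Fin n, if (Finset.univ.filter fun i : Fin n => (decide (σ i = j)) = true).card = 1 then (1 : ℂ) else 0) = 1 := by
      apply Finset.prod_eq_one
      intro j _
      rw [if_pos]
      rw [Finset.card_eq_one]
      exact ⟨σ.symm j, by ext i; simp [Equiv.eq_symm_apply, eq_comm]⟩
    rw [r1, r2, one_mul, one_mul]
    apply Finset.prod_congr rfl
    intro i _
    simp

/-- The permanent of a square complex matrix. -/
noncomputable def cperm {ι : Type*} [DecidableEq ι] [Fintype ι]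
    (M : Matrix ι ι ℂ) : ℂ :=
  ∑ σ : Equiv.Perm ι, ∏ i, M i (σ i)

/-- The partition sum of the DE-NFG `N_DE(θ)` equals `perm(θ) * conj(perm(θ)) = |perm(θ)|²`. -/
theorem partition_sum_DENFG_eq_abs_sq_permanent (n : ℕ) (hn : 1 ≤ n)
    (θ : Matrix (Fin n) (Fin n) ℂ) :
    (∑ x : Fin n → Fin n → Bool, ∑ x' : Fin n → Fin n → Bool,
      (∏ i : Fin n,
        (if (Finset.univ.filter fun j : Fin n => x i j = true).card = 1
          then (1 : ℂ) else 0) *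
        (if (Finset.univ.filter fun j : Fin n => x' i j = true).card = 1
          then (1 : ℂ) else 0)) *
      (∏ j : Fin n,
        (if (Finset.univ.filter fun i : Fin n => x i j = true).card = 1
          then (1 : ℂ) else 0) *
        (if (Finset.univ.filter fun i : Fin n => x' i j = true).card = 1
          then (1 : ℂ) else 0)) *
      (∏ i : Fin n, ∏ j : Fin n,
        (if x i j = true then θ i j else 1) *
        (if x' i j = true then (starRingEnd ℂ) (θ i j) else 1))
      = cperm θ * (starRingEnd ℂ) (cperm θ))
    ∧ cperm θ * (starRingEnd ℂ) (cperm θ) = ((‖cperm θ‖ : ℝ) ^ 2 : ℂ) := by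
  constructor
  · set A : (Fin n → Fin n → Bool) → ℂ := fun x =>
      (∏ i : Fin n, if (Finset.univ.filter fun j : Fin n => x i j = true).card = 1 then (1 : ℂ) else 0) *
      (∏ j : Fin n, if (Finset.univ.filter fun i : Fin n => x i j = true).card = 1 then (1 : ℂ) else 0) *
      (∏ i : Fin n, ∏ j : Fin n, if x i j = true then θ i j else 1) with hA
    set B : (Fin n → Fin n → Bool) → ℂ := fun x =>
      (∏ i : Fin n, if (Finset.univ.filter fun j : Fin n => x i j = true).card = 1 then (1 : ℂ) else 0) *
      (∏ j : Fin n, if (Finset.univ.filter fun i : Fin n => x i j = true).card = 1 then (1 : ℂ) else 0) *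
      (∏ i : Fin n, ∏ j : Fin n, if x i j = true then (starRingEnd ℂ) (θ i j) else 1) with hB
    have step : ∀ x x' : Fin n → Fin n → Bool,
        (∏ i : Fin n,
          (if (Finset.univ.filter fun j : Fin n => x i j = true).card = 1 then (1 : ℂ) else 0) *
          (if (Finset.univ.filter fun j : Fin n => x' i j = true).card = 1 then (1 : ℂ) else 0)) *
        (∏ j : Fin n,
          (if (Finset.univ.filter fun i : Fin n => x i j = true).card = 1 then (1 : ℂ) else 0) *
          (if (Finset.univ.filter fun i : Fin n => x' i j = true).card = 1 then (1 : ℂ) else 0)) *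
        (∏ i : Fin n, ∏ j : Fin n,
          (if x i j = true then θ i j else 1) *
          (if x' i j = true then (starRingEnd ℂ) (θ i j) else 1)) = A x * B x' := by
      intro x x'
      rw [hA, hB]
      simp only [Finset.prod_mul_distrib]
      ring
    calc (∑ x : Fin n → Fin n → Bool, ∑ x' : Fin n → Fin n → Bool,
        (∏ i : Fin n,
          (if (Finset.univ.filter fun j : Fin n => x i j = true).card = 1 then (1 : ℂ) else 0) *
          (if (Finset.univ.filter fun j : Fin n => x' i j = true).card = 1 then (1 : ℂ) else 0)) *
        (∏ j : Fin n,
          (if (Finset.univ.filter fun i : Fin n => x i j = true).card = 1 then (1 : ℂ) else 0) *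
          (if (Finset.univ.filter fun i : Fin n => x' i j = true).card = 1 then (1 : ℂ) else 0)) *
        (∏ i : Fin n, ∏ j : Fin n,
          (if x i j = true then θ i j else 1) *
          (if x' i j = true then (starRingEnd ℂ) (θ i j) else 1)))
        = ∑ x : Fin n → Fin n → Bool, ∑ x' : Fin n → Fin n → Bool, A x * B x' := by
          exact Finset.sum_congr rfl fun x _ => Finset.sum_congr rfl fun x' _ => step x x'
      _ = (∑ x : Fin n → Fin n → Bool, A x) * (∑ x' : Fin n → Fin n → Bool, B x') := by
          rw [← Finset.sum_mul_sum]
      _ = cperm θ * (starRingEnd ℂ) (cperm θ) := by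
          rw [hA, hB]
          rw [perm_matrix_sum n θ, perm_matrix_sum n (fun i j => (starRingEnd ℂ) (θ i j))]
          congr 1
          unfold cperm
          rw [map_sum]
          exact Finset.sum_congr rfl fun σ _ => (map_prod _ _ _).symm
  · rw [Complex.mul_conj]
    norm_cast
    exact (Complex.sq_norm _).symm
end

section
/- Let n ≥ 1 and let σ₁, σ₂ ∈ S_n. Then the number of pairs (τ₁, τ₂) ∈ S_n × S_n such that {τ₁(i), τ₂(i)} = {σ₁(i), σ₂(i)} (as sets) for every i ∈ {1,…,n} is exactly 2^{c(σ₁σ₂⁻¹)}, where c(σ) denotes the number of cycles of length at least 2 in the cycle decomposition of σ. -/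
open scoped BigOperators
open Finset Equiv Equiv.Perm

namespace CardPairsAux

variable {n : ℕ}

/-- helper: case analysis for equal pair finsets -/
lemma pair_eq_cases {α : Type*} [DecidableEq α] {a b c d : α}
    (h : ({a, b} : Finset α) = {c, d}) :
    (a = c ∧ b = d) ∨ (a = d ∧ b = c) := by
  have h1 : a = c ∨ a = d := by
    have : a ∈ ({c, d} : Finset α) := h ▸ (by simp)
    simpa using this
  have h2 : b = c ∨ b = d := by
    have : b ∈ ({c, d} : Finset α) := h ▸ (by simp)
    simpa using this
  have h3 : c = a ∨ c = b := by
    have : c ∈ ({a, b} : Finset α) := h ▸ (by simp)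
    simpa using this
  have h4 : d = a ∨ d = b := by
    have : d ∈ ({a, b} : Finset α) := h ▸ (by simp)
    simpa using this
  rcases h1 with rfl | rfl
  · rcases h2 with rfl | h2
    · rcases h4 with h4 | rfl
      · exact Or.inl ⟨rfl, h4.symm⟩
      · exact Or.inl ⟨rfl, rfl⟩
    · exact Or.inl ⟨rfl, h2⟩
  · rcases h2 with rfl | rfl
    · exact Or.inr ⟨rfl, rfl⟩
    · rcases h3 with h3 | rfl
      · exact Or.inr ⟨rfl, h3.symm⟩
      · exact Or.inl ⟨rfl, rfl⟩

noncomputable def rho (π : Perm (Fin n)) (T : Finset (Fin n)) : Perm (Fin n) :=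
  if h : (∀ x, x ∈ T ↔ π x ∈ T) then ofSubtype (π.subtypePerm fun x => (h x).symm) else 1

lemma rho_apply_mem {π : Perm (Fin n)} {T : Finset (Fin n)}
    (h : ∀ x, x ∈ T ↔ π x ∈ T) {x : Fin n} (hx : x ∈ T) :
    rho π T x = π x := by
  classical
  rw [rho, dif_pos h, ofSubtype_apply_of_mem (π.subtypePerm fun x => (h x).symm) hx, subtypePerm_apply]

lemma rho_apply_not_mem {π : Perm (Fin n)} {T : Finset (Fin n)}
    (h : ∀ x, x ∈ T ↔ π x ∈ T) {x : Fin n} (hx : x ∉ T) :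
    rho π T x = x := by
  classical
  rw [rho, dif_pos h, ofSubtype_apply_of_not_mem (π.subtypePerm fun x => (h x).symm) hx]

end CardPairsAux

open CardPairsAux

/-- The number of pairs `(τ₁, τ₂)` with `{τ₁ i, τ₂ i} = {σ₁ i, σ₂ i}` for all `i`
is `2 ^ c(σ₁ σ₂⁻¹)`, where `c` counts cycles of length at least 2. -/
theorem card_pairs_same_edge_sets (n : ℕ) (hn : 1 ≤ n)
    (σ₁ σ₂ : Equiv.Perm (Fin n)) :
    (Finset.univ.filter
        (fun τ : Equiv.Perm (Fin n) × Equiv.Perm (Fin n) =>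
          ∀ i : Fin n, ({τ.1 i, τ.2 i} : Finset (Fin n)) = {σ₁ i, σ₂ i})).card
    = 2 ^ ((σ₁ * σ₂⁻¹).cycleType.card) := by
  classical
  set π := σ₁ * σ₂⁻¹ with hπdef
  have hπσ : ∀ i : Fin n, π (σ₂ i) = σ₁ i := by
    intro i; simp [hπdef]
  -- Step 0: cycleType.card = cycleFactorsFinset.card
  have hct : π.cycleType.card = π.cycleFactorsFinset.card := by
    rw [cycleType_def, Multiset.card_map]; rfl
  rw [hct, ← Finset.card_powerset]
  -- invariant sets
  set Invs : Finset (Finset (Fin n)) :=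
    Finset.univ.filter (fun T => T ⊆ π.support ∧ ∀ x, x ∈ T ↔ π x ∈ T) with hInvs
  -- Step 1 : pairs ↔ invariant sets
  have step1 :
      (Finset.univ.filter
        (fun τ : Equiv.Perm (Fin n) × Equiv.Perm (Fin n) =>
          ∀ i : Fin n, ({τ.1 i, τ.2 i} : Finset (Fin n)) = {σ₁ i, σ₂ i})).card
      = Invs.card := by
    apply Finset.card_nbij'
      (i := fun p : Equiv.Perm (Fin n) × Equiv.Perm (Fin n) => Finset.univ.filter (fun x => p.2 (σ₂⁻¹ x) ≠ x))
      (j := fun T => ((rho π T)⁻¹ * σ₁, rho π T * σ₂))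
    · -- forward membership
      rintro ⟨τ₁, τ₂⟩ hp
      simp only [Finset.mem_coe, Finset.mem_filter, Finset.mem_univ, true_and] at hp
      have cases' : ∀ i : Fin n,
          (τ₁ i = σ₁ i ∧ τ₂ i = σ₂ i) ∨ (τ₁ i = σ₂ i ∧ τ₂ i = σ₁ i) :=
        fun i => pair_eq_cases (hp i)
      set T := Finset.univ.filter (fun x => τ₂ (σ₂⁻¹ x) ≠ x) with hT
      have memT : ∀ x, x ∈ T ↔ τ₂ (σ₂⁻¹ x) ≠ x := by
        intro x; simp [hT]
      have P : ∀ x ∈ T, τ₂ (σ₂⁻¹ x) = π x ∧ τ₁ (σ₂⁻¹ x) = x ∧ π x ≠ x := by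
        intro x hx
        have hx' := (memT x).mp hx
        rcases cases' (σ₂⁻¹ x) with ⟨h1, h2⟩ | ⟨h1, h2⟩
        · exfalso; apply hx'; rw [h2]; simp
        · have e1 : τ₂ (σ₂⁻¹ x) = π x := by rw [h2, ← hπσ (σ₂⁻¹ x)]; simp
          have e2 : τ₁ (σ₂⁻¹ x) = x := by rw [h1]; simp
          refine ⟨e1, e2, ?_⟩
          intro hfix
          apply hx'; rw [e1, hfix]
        
      have Q : ∀ x ∉ T, τ₂ (σ₂⁻¹ x) = x ∧ τ₁ (σ₂⁻¹ x) = π x := by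
        intro x hx
        have hx' : τ₂ (σ₂⁻¹ x) = x := by
          by_contra hc; exact hx ((memT x).mpr hc)
        rcases cases' (σ₂⁻¹ x) with ⟨h1, h2⟩ | ⟨h1, h2⟩
        · refine ⟨hx', ?_⟩
          rw [h1, ← hπσ (σ₂⁻¹ x)]; simp
        · have hs : σ₁ (σ₂⁻¹ x) = x := by rw [← h2, hx']
          have hπx : π x = x := by
            rw [← hπσ (σ₂⁻¹ x)] at hs; simpa using hs
          refine ⟨hx', ?_⟩
          rw [h1, hπx]; simp
      show T ∈ (↑Invs : Set (Finset (Fin n)))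
      simp only [Finset.mem_coe, hInvs, Finset.mem_filter, Finset.mem_univ, true_and]
      constructor
      · intro x hx
        exact Equiv.Perm.mem_support.mpr (P x hx).2.2
      · intro x
        constructor
        · intro hx
          by_contra hπx
          have q := Q (π x) hπx
          have p := P x hx
          have : σ₂⁻¹ (π x) = σ₂⁻¹ x := by
            apply τ₂.injective
            rw [q.1, p.1]
          have : π x = x := by simpa using this
          exact p.2.2 this
        · intro hx
          by_contra hxx
          have q := Q x hxx
          have p := P (π x) hx
          have : σ₂⁻¹ (π x) = σ₂⁻¹ x := by
            apply τ₁.injective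
            rw [q.2, p.2.1]
          have hpx : π x = x := by simpa using this
          have hne := p.2.2
          rw [hpx] at hne
          exact hne hpx
    · -- backward membership
      intro T hT
      simp only [Finset.mem_coe, hInvs, Finset.mem_filter, Finset.mem_univ, true_and] at hT
      obtain ⟨hsub, hinv⟩ := hT
      simp only [Finset.mem_coe, Finset.mem_filter, Finset.mem_univ, true_and]
      intro i
      set x := σ₂ i with hx
      have hσ₁ : σ₁ i = π x := (hπσ i).symm
      have happ2 : (rho π T * σ₂) i = rho π T x := by simp [hx]
      have happ1 : ((rho π T)⁻¹ * σ₁) i = (rho π T)⁻¹ (π x) := by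
        simp [hσ₁]
      by_cases hmem : x ∈ T
      · have h1 : rho π T x = π x := rho_apply_mem hinv hmem
        have h2 : (rho π T)⁻¹ (π x) = x := by
          rw [Equiv.Perm.inv_eq_iff_eq]; exact h1.symm
        rw [happ1, happ2, h1, h2, hσ₁, hx]
        exact Finset.pair_comm _ _
      · have hπmem : π x ∉ T := fun hc => hmem ((hinv x).mpr hc)
        have h1 : rho π T x = x := rho_apply_not_mem hinv hmem
        have h2 : (rho π T)⁻¹ (π x) = π x := by
          rw [Equiv.Perm.inv_eq_iff_eq]
          exact (rho_apply_not_mem hinv hπmem).symm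
        rw [happ1, happ2, h1, h2, hσ₁, hx]
    · -- left inverse
      rintro ⟨τ₁, τ₂⟩ hp
      simp only [Finset.mem_coe, Finset.mem_filter, Finset.mem_univ, true_and] at hp
      have cases' : ∀ i : Fin n,
          (τ₁ i = σ₁ i ∧ τ₂ i = σ₂ i) ∨ (τ₁ i = σ₂ i ∧ τ₂ i = σ₁ i) :=
        fun i => pair_eq_cases (hp i)
      set T := Finset.univ.filter (fun x => τ₂ (σ₂⁻¹ x) ≠ x) with hT
      have memT : ∀ x, x ∈ T ↔ τ₂ (σ₂⁻¹ x) ≠ x := by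
        intro x; simp [hT]
      have P : ∀ x ∈ T, τ₂ (σ₂⁻¹ x) = π x ∧ τ₁ (σ₂⁻¹ x) = x ∧ π x ≠ x := by
        intro x hx
        have hx' := (memT x).mp hx
        rcases cases' (σ₂⁻¹ x) with ⟨h1, h2⟩ | ⟨h1, h2⟩
        · exfalso; apply hx'; rw [h2]; simp
        · have e1 : τ₂ (σ₂⁻¹ x) = π x := by rw [h2, ← hπσ (σ₂⁻¹ x)]; simp
          have e2 : τ₁ (σ₂⁻¹ x) = x := by rw [h1]; simp
          refine ⟨e1, e2, ?_⟩
          intro hfix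
          apply hx'; rw [e1, hfix]
      have Q : ∀ x ∉ T, τ₂ (σ₂⁻¹ x) = x ∧ τ₁ (σ₂⁻¹ x) = π x := by
        intro x hx
        have hx' : τ₂ (σ₂⁻¹ x) = x := by
          by_contra hc; exact hx ((memT x).mpr hc)
        rcases cases' (σ₂⁻¹ x) with ⟨h1, h2⟩ | ⟨h1, h2⟩
        · refine ⟨hx', ?_⟩
          rw [h1, ← hπσ (σ₂⁻¹ x)]; simp
        · have hs : σ₁ (σ₂⁻¹ x) = x := by rw [← h2, hx']
          have hπx : π x = x := by
            rw [← hπσ (σ₂⁻¹ x)] at hs; simpa using hs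
          refine ⟨hx', ?_⟩
          rw [h1, hπx]; simp
      have hinv : ∀ x, x ∈ T ↔ π x ∈ T := by
        intro x
        constructor
        · intro hx
          by_contra hπx
          have q := Q (π x) hπx
          have p := P x hx
          have : σ₂⁻¹ (π x) = σ₂⁻¹ x := by
            apply τ₂.injective; rw [q.1, p.1]
          have : π x = x := by simpa using this
          exact p.2.2 this
        · intro hx
          by_contra hxx
          have q := Q x hxx
          have p := P (π x) hx
          have : σ₂⁻¹ (π x) = σ₂⁻¹ x := by
            apply τ₁.injective; rw [q.2, p.2.1]
          have hpx : π x = x := by simpa using this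
          have hne := p.2.2
          rw [hpx] at hne
          exact hne hpx
      -- now show the pair reconstructs
      refine Prod.ext ?_ ?_
      · -- first component : (rho π T)⁻¹ * σ₁ = τ₁
        simp only
        refine Equiv.ext fun i => ?_
        change ((rho π T)⁻¹ * σ₁) i = τ₁ i
        have hσ₁ : σ₁ i = π (σ₂ i) := (hπσ i).symm
        by_cases hmem : σ₂ i ∈ T
        · have p := P (σ₂ i) hmem
          have h1 : rho π T (σ₂ i) = π (σ₂ i) := rho_apply_mem hinv hmem
          have h2 : (rho π T)⁻¹ (π (σ₂ i)) = σ₂ i := by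
            rw [Equiv.Perm.inv_eq_iff_eq]; exact h1.symm
          have : τ₁ i = σ₂ i := by simpa using p.2.1
          simp only [Equiv.Perm.mul_apply, hσ₁, h2, this]
        · have q := Q (σ₂ i) hmem
          have hπmem : π (σ₂ i) ∉ T := fun hc => hmem ((hinv (σ₂ i)).mpr hc)
          have h2 : (rho π T)⁻¹ (π (σ₂ i)) = π (σ₂ i) := by
            rw [Equiv.Perm.inv_eq_iff_eq]
            exact (rho_apply_not_mem hinv hπmem).symm
          have : τ₁ i = π (σ₂ i) := by simpa using q.2
          simp only [Equiv.Perm.mul_apply, hσ₁, h2, this]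
      · simp only
        refine Equiv.ext fun i => ?_
        change (rho π T * σ₂) i = τ₂ i
        by_cases hmem : σ₂ i ∈ T
        · have p := P (σ₂ i) hmem
          have h1 : rho π T (σ₂ i) = π (σ₂ i) := rho_apply_mem hinv hmem
          have : τ₂ i = π (σ₂ i) := by simpa using p.1
          simp only [Equiv.Perm.mul_apply, h1, this]
        · have q := Q (σ₂ i) hmem
          have h1 : rho π T (σ₂ i) = σ₂ i := rho_apply_not_mem hinv hmem
          have : τ₂ i = σ₂ i := by simpa using q.1
          simp only [Equiv.Perm.mul_apply, h1, this]
    · -- right inverse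
      intro T hT
      simp only [Finset.mem_coe, hInvs, Finset.mem_filter, Finset.mem_univ, true_and] at hT
      obtain ⟨hsub, hinv⟩ := hT
      ext x
      have hσσ : ∀ y, σ₂ (σ₂⁻¹ y) = y := fun y => by simp
      simp only [Finset.mem_filter, Finset.mem_univ, true_and, Equiv.Perm.mul_apply,
        hσσ]
      constructor
      · intro hne
        by_contra hx
        exact hne (rho_apply_not_mem hinv hx)
      · intro hx
        rw [rho_apply_mem hinv hx]
        exact Equiv.Perm.mem_support.mp (hsub hx)
  rw [step1]
  -- Step 2 : invariant sets ↔ subsets of cycle factors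
  apply Finset.card_nbij'
    (i := fun T => π.cycleFactorsFinset.filter (fun c => c.support ⊆ T))
    (j := fun C => C.biUnion Equiv.Perm.support)
  · intro T _
    simp only [Finset.mem_coe, Finset.mem_powerset]
    exact Finset.filter_subset _ _
  · intro C hC
    simp only [Finset.mem_coe, Finset.mem_powerset] at hC
    simp only [Finset.mem_coe, hInvs, Finset.mem_filter, Finset.mem_univ, true_and]
    constructor
    · intro x hx
      rw [Finset.mem_biUnion] at hx
      obtain ⟨c, hc, hx⟩ := hx
      exact mem_cycleFactorsFinset_support_le (hC hc) hx
    · intro x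
      simp only [Finset.mem_biUnion]
      constructor
      · rintro ⟨c, hc, hx⟩
        exact ⟨c, hc, (mem_cycleFactorsFinset_support (hC hc) x).mpr hx⟩
      · rintro ⟨c, hc, hx⟩
        exact ⟨c, hc, (mem_cycleFactorsFinset_support (hC hc) x).mp hx⟩
  · -- left inverse : biUnion of filter = T
    intro T hT
    simp only [Finset.mem_coe, hInvs, Finset.mem_filter, Finset.mem_univ, true_and] at hT
    obtain ⟨hsub, hinv⟩ := hT
    apply Finset.Subset.antisymm
    · intro x hx
      rw [Finset.mem_biUnion] at hx
      obtain ⟨c, hc, hx⟩ := hx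
      rw [Finset.mem_filter] at hc
      exact hc.2 hx
    · intro x hx
      rw [Finset.mem_biUnion]
      refine ⟨π.cycleOf x, ?_, ?_⟩
      · rw [Finset.mem_filter]
        refine ⟨cycleOf_mem_cycleFactorsFinset_iff.mpr (hsub hx), ?_⟩
        intro y hy
        rw [Equiv.Perm.mem_support_cycleOf_iff] at hy
        obtain ⟨k, hk⟩ := hy.1
        have hz : ∀ m : ℤ, (π ^ m) x ∈ T := by
          intro m
          induction m using Int.induction_on with
          | zero => simpa using hx
          | succ k ih =>
              have : (π ^ ((k : ℤ) + 1)) x = π ((π ^ (k : ℤ)) x) := by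
                rw [add_comm, zpow_add, zpow_one, Equiv.Perm.mul_apply]
              rw [this]
              exact (hinv _).mp ih
          | pred k ih =>
              have he : (1 : ℤ) + (-(k : ℤ) - 1) = -(k : ℤ) := by ring
              have h1 : π ((π ^ (-(k : ℤ) - 1)) x) = (π ^ (-(k : ℤ))) x := by
                rw [← Equiv.Perm.mul_apply, ← zpow_one_add, he]
              exact (hinv _).mpr (by rw [h1]; exact ih)
        rw [← hk]
        exact hz k
      · rw [Equiv.Perm.mem_support_cycleOf_iff]
        exact ⟨Equiv.Perm.SameCycle.refl _ _, hsub hx⟩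
  · -- right inverse : filter of biUnion = C
    intro C hC
    simp only [Finset.mem_coe, Finset.mem_powerset] at hC
    apply Finset.Subset.antisymm
    · intro c hc
      rw [Finset.mem_filter] at hc
      obtain ⟨hcf, hcs⟩ := hc
      have hcyc : c.IsCycle := (mem_cycleFactorsFinset_iff.mp hcf).1
      have hne1 : c.support ≠ ∅ := fun h =>
        hcyc.ne_one (Equiv.Perm.support_eq_empty_iff.mp h)
      obtain ⟨x, hx⟩ := Finset.nonempty_iff_ne_empty.mpr hne1
      have hxd := hcs hx
      rw [Finset.mem_biUnion] at hxd
      obtain ⟨d, hd, hxd⟩ := hxd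
      have hcd : c = d := by
        by_contra hnecd
        have hdis := π.cycleFactorsFinset_pairwise_disjoint hcf (hC hd) hnecd
        rcases hdis x with h | h
        · exact (Equiv.Perm.mem_support.mp hx) h
        · exact (Equiv.Perm.mem_support.mp hxd) h
      rw [hcd]; exact hd
    · intro c hc
      rw [Finset.mem_filter]
      exact ⟨hC hc, Finset.subset_biUnion_of_mem _ hc⟩
end

section
/- Let n ≥ 1 and let a, u, v be complex numbers. Then ∑_{σ∈S_n} ( ∏_{ℓ=2}^n (2u^ℓ)^{c_ℓ(σ)} ) · ( ∑_{ρ ∈ Perm(Fix(σ))} a^{c_1(ρ)} ∏_{ℓ=2}^{|Fix(σ)|} (v^ℓ)^{c_ℓ(ρ)} ) = ∑_{τ∈S_n} a^{c_1(τ)} · ∏_{ℓ=2}^n (2u^ℓ + v^ℓ)^{c_ℓ(τ)}, where Fix(σ) := {i ∈ {1,…,n} : σ(i) = i}, Perm(Fix(σ)) is the set of all permutations of the set Fix(σ), and for ρ ∈ Perm(Fix(σ)), c_ℓ(ρ) counts the cycles of length ℓ of ρ. -/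
open scoped BigOperators
open Equiv Equiv.Perm Finset

section Aux

variable {α : Type*} [Fintype α] [DecidableEq α]

private lemma prodA (π : Equiv.Perm α) (w : ℕ → ℂ) :
    ∏ ℓ ∈ Finset.Icc 2 (Fintype.card α), w ℓ ^ (π.cycleType.count ℓ)
      = (π.cycleType.map w).prod := by
  rw [Finset.prod_multiset_map_count]
  refine (Finset.prod_subset ?_ ?_).symm
  · intro ℓ hℓ
    rw [Multiset.mem_toFinset] at hℓ
    refine Finset.mem_Icc.mpr ⟨Equiv.Perm.two_le_of_mem_cycleType hℓ, ?_⟩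
    obtain ⟨c, hc, rfl⟩ := by
      simpa [Equiv.Perm.cycleType_def, Multiset.mem_map] using hℓ
    exact (c.support.card_le_univ).trans_eq (by simp)
  · intro ℓ _ hℓ
    rw [Multiset.mem_toFinset] at hℓ
    simp [Multiset.count_eq_zero_of_notMem hℓ]

private lemma prodB (π : Equiv.Perm α) (w : ℕ → ℂ) :
    (π.cycleType.map w).prod = ∏ c ∈ π.cycleFactorsFinset, w c.support.card := by
  rw [Equiv.Perm.cycleType_def, Multiset.map_map]
  rfl

private def Dfilter (σ : Equiv.Perm α) : Finset (Equiv.Perm α) :=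
  Finset.univ.filter (fun ρ' => ∀ x, ¬ σ x = x → ρ' x = x)

private lemma mem_Dfilter {σ ρ' : Equiv.Perm α} :
    ρ' ∈ Dfilter σ ↔ ∀ x, ¬ σ x = x → ρ' x = x := by
  simp [Dfilter]

private lemma fixC (σ : Equiv.Perm α) (ρ : Equiv.Perm {i : α // σ i = i}) :
    (Finset.univ.filter fun i : {i : α // σ i = i} => ρ i = i).card
      = (Finset.univ.filter fun i : α => (σ * Equiv.Perm.ofSubtype ρ) i = i).card := by
  refine Finset.card_bij (fun i _ => i.val) ?_ ?_ ?_
  · intro x h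
    rw [Finset.mem_filter] at h
    refine Finset.mem_filter.mpr ⟨Finset.mem_univ _, ?_⟩
    have h1 : Equiv.Perm.ofSubtype ρ x.val = x.val := by
      rw [Equiv.Perm.ofSubtype_apply_of_mem ρ x.2, h.2]
    rw [Equiv.Perm.mul_apply, h1, x.2]
  · intro x hx y hy h
    exact Subtype.ext h
  · intro i hi
    rw [Finset.mem_filter] at hi
    have h2 := hi.2
    rw [Equiv.Perm.mul_apply] at h2
    by_cases hs : σ i = i
    · have ho : Equiv.Perm.ofSubtype ρ i = (ρ ⟨i, hs⟩ : α) :=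
        Equiv.Perm.ofSubtype_apply_of_mem ρ hs
      have hρ : (ρ ⟨i, hs⟩ : α) = i := by
        have hfix := (ρ ⟨i, hs⟩).2
        rw [ho, hfix] at h2
        exact h2
      exact ⟨⟨i, hs⟩, Finset.mem_filter.mpr ⟨Finset.mem_univ _, Subtype.ext hρ⟩, rfl⟩
    · exfalso
      rw [Equiv.Perm.ofSubtype_apply_of_not_mem ρ hs] at h2
      exact hs h2

private lemma innerSum (σ : Equiv.Perm α) (a v : ℂ) :
    ∑ ρ : Equiv.Perm {i : α // σ i = i},
      a ^ (Finset.univ.filter fun i : {i : α // σ i = i} => ρ i = i).card *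
        ∏ ℓ ∈ Finset.Icc 2 (Fintype.card {i : α // σ i = i}),
          (v ^ ℓ) ^ (ρ.cycleType.count ℓ)
    = ∑ ρ' ∈ Dfilter σ,
        a ^ (Finset.univ.filter fun i : α => (σ * ρ') i = i).card *
          ∏ c ∈ ρ'.cycleFactorsFinset, v ^ c.support.card := by
  have key : ∀ ρ : Equiv.Perm {i : α // σ i = i},
      a ^ (Finset.univ.filter fun i : {i : α // σ i = i} => ρ i = i).card *
        ∏ ℓ ∈ Finset.Icc 2 (Fintype.card {i : α // σ i = i}),
          (v ^ ℓ) ^ (ρ.cycleType.count ℓ)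
      = a ^ (Finset.univ.filter fun i : α => (σ * Equiv.Perm.ofSubtype ρ) i = i).card *
          ∏ c ∈ (Equiv.Perm.ofSubtype ρ).cycleFactorsFinset, v ^ c.support.card := by
    intro ρ
    rw [fixC, prodA ρ (fun ℓ => v ^ ℓ), ← Equiv.Perm.cycleType_ofSubtype,
      prodB (Equiv.Perm.ofSubtype ρ) (fun ℓ => v ^ ℓ)]
  simp_rw [key]
  refine Finset.sum_bij (fun ρ _ => Equiv.Perm.ofSubtype ρ) ?_ ?_ ?_ ?_
  · intro ρ _
    exact mem_Dfilter.mpr fun x hx => Equiv.Perm.ofSubtype_apply_of_not_mem ρ hx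
  · intro ρ₁ _ ρ₂ _ h
    have := congrArg (Equiv.Perm.subtypeEquivSubtypePerm (fun i => σ i = i)).symm
      (Subtype.ext (p := fun f : Equiv.Perm α => ∀ x, ¬ σ x = x → f x = x) h :
        ((Equiv.Perm.subtypeEquivSubtypePerm (fun i => σ i = i)) ρ₁ =
         (Equiv.Perm.subtypeEquivSubtypePerm (fun i => σ i = i)) ρ₂))
    simpa using this
  · intro ρ' hρ'
    rw [mem_Dfilter] at hρ'
    refine ⟨(Equiv.Perm.subtypeEquivSubtypePerm (fun i => σ i = i)).symm ⟨ρ', hρ'⟩,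
      Finset.mem_univ _, ?_⟩
    have := (Equiv.Perm.subtypeEquivSubtypePerm (fun i => σ i = i)).apply_symm_apply ⟨ρ', hρ'⟩
    exact congrArg Subtype.val this
  · intro ρ _
    rfl

private lemma commS {τ : Equiv.Perm α} {S : Finset (Equiv.Perm α)}
    (hS : S ⊆ τ.cycleFactorsFinset) :
    (S : Set (Equiv.Perm α)).Pairwise Commute :=
  ((τ.cycleFactorsFinset_pairwise_disjoint.mono (by exact_mod_cast hS)).mono'
    fun _ _ => Equiv.Perm.Disjoint.commute)

private lemma cycD {τ : Equiv.Perm α} {S : Finset (Equiv.Perm α)}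
    (hS : S ⊆ τ.cycleFactorsFinset) :
    (S.noncommProd id (commS hS)).cycleFactorsFinset = S := by
  rw [Equiv.Perm.cycleFactorsFinset_eq_finset]
  refine ⟨fun f hf => (Equiv.Perm.mem_cycleFactorsFinset_iff.mp (hS hf)).1,
    τ.cycleFactorsFinset_pairwise_disjoint.mono (by exact_mod_cast hS), rfl⟩

private lemma disjE {f g τ : Equiv.Perm α}
    (hf : f.cycleFactorsFinset ⊆ τ.cycleFactorsFinset)
    (hg : g.cycleFactorsFinset ⊆ τ.cycleFactorsFinset)
    (hfg : Disjoint f.cycleFactorsFinset g.cycleFactorsFinset) :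
    f.Disjoint g := by
  intro x
  by_contra hx
  push_neg at hx
  obtain ⟨hfx, hgx⟩ := hx
  have h1 : f.cycleOf x ∈ τ.cycleFactorsFinset :=
    hf (Equiv.Perm.cycleOf_mem_cycleFactorsFinset_iff.mpr (Equiv.Perm.mem_support.mpr hfx))
  have h2 : g.cycleOf x ∈ τ.cycleFactorsFinset :=
    hg (Equiv.Perm.cycleOf_mem_cycleFactorsFinset_iff.mpr (Equiv.Perm.mem_support.mpr hgx))
  have hne : f.cycleOf x ≠ g.cycleOf x := by
    intro h
    exact (Finset.disjoint_left.mp hfg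
      (Equiv.Perm.cycleOf_mem_cycleFactorsFinset_iff.mpr (Equiv.Perm.mem_support.mpr hfx)))
      (h ▸ Equiv.Perm.cycleOf_mem_cycleFactorsFinset_iff.mpr (Equiv.Perm.mem_support.mpr hgx))
  have hd := τ.cycleFactorsFinset_pairwise_disjoint h1 h2 hne
  have hx1 : x ∈ (f.cycleOf x).support :=
    Equiv.Perm.mem_support_cycleOf_iff.mpr
      ⟨Equiv.Perm.SameCycle.refl _ _, Equiv.Perm.mem_support.mpr hfx⟩
  have hx2 : x ∈ (g.cycleOf x).support :=
    Equiv.Perm.mem_support_cycleOf_iff.mpr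
      ⟨Equiv.Perm.SameCycle.refl _ _, Equiv.Perm.mem_support.mpr hgx⟩
  rcases hd x with h | h
  · exact (Equiv.Perm.mem_support.mp hx1) h
  · exact (Equiv.Perm.mem_support.mp hx2) h

private lemma bijMain (a u v : ℂ) :
    ∑ σ : Equiv.Perm α, ∑ ρ' ∈ Dfilter σ,
      (∏ c ∈ σ.cycleFactorsFinset, 2 * u ^ c.support.card) *
        (a ^ (Finset.univ.filter fun i : α => (σ * ρ') i = i).card *
          ∏ c ∈ ρ'.cycleFactorsFinset, v ^ c.support.card)
    = ∑ τ : Equiv.Perm α, ∑ S ∈ τ.cycleFactorsFinset.powerset,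
        a ^ (Finset.univ.filter fun i : α => τ i = i).card *
          ((∏ c ∈ S, 2 * u ^ c.support.card) *
            ∏ c ∈ τ.cycleFactorsFinset \ S, v ^ c.support.card) := by
  rw [Finset.sum_sigma' Finset.univ
      (fun σ : Equiv.Perm α => Dfilter σ)
      (fun σ ρ' => (∏ c ∈ σ.cycleFactorsFinset, 2 * u ^ c.support.card) *
        (a ^ (Finset.univ.filter fun i : α => (σ * ρ') i = i).card *
          ∏ c ∈ ρ'.cycleFactorsFinset, v ^ c.support.card)),
    Finset.sum_sigma' Finset.univ
      (fun τ : Equiv.Perm α => τ.cycleFactorsFinset.powerset)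
      (fun τ S => a ^ (Finset.univ.filter fun i : α => τ i = i).card *
          ((∏ c ∈ S, 2 * u ^ c.support.card) *
            ∏ c ∈ τ.cycleFactorsFinset \ S, v ^ c.support.card))]
  have memS : ∀ (x : Σ _ : Equiv.Perm α, Equiv.Perm α),
      x ∈ Finset.univ.sigma (fun σ : Equiv.Perm α => Dfilter σ) → x.1.Disjoint x.2 := by
    intro x hx
    rw [Finset.mem_sigma] at hx
    have h2 := mem_Dfilter.mp hx.2
    intro i
    by_cases h : x.1 i = i
    · exact Or.inl h
    · exact Or.inr (h2 i h)
  have memT : ∀ (y : Σ _ : Equiv.Perm α, Finset (Equiv.Perm α)),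
      y ∈ Finset.univ.sigma (fun τ : Equiv.Perm α => τ.cycleFactorsFinset.powerset) →
      y.2 ⊆ y.1.cycleFactorsFinset := by
    intro y hy
    rw [Finset.mem_sigma, Finset.mem_powerset] at hy
    exact hy.2
  refine Finset.sum_bij'
    (fun x hx => (⟨x.1 * x.2, x.1.cycleFactorsFinset⟩ : Σ _ : Equiv.Perm α, Finset (Equiv.Perm α)))
    (fun y hy => (⟨y.2.noncommProd id (commS (memT y hy)),
      (y.1.cycleFactorsFinset \ y.2).noncommProd id (commS Finset.sdiff_subset)⟩ :
        Σ _ : Equiv.Perm α, Equiv.Perm α))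
    ?_ ?_ ?_ ?_ ?_
  · -- hi
    intro x hx
    rw [Finset.mem_sigma, Finset.mem_powerset]
    refine ⟨Finset.mem_univ _, ?_⟩
    rw [(memS x hx).cycleFactorsFinset_mul_eq_union]
    exact Finset.subset_union_left
  · -- hj
    intro y hy
    have hd : (y.2.noncommProd id (commS (memT y hy))).Disjoint
        ((y.1.cycleFactorsFinset \ y.2).noncommProd id (commS Finset.sdiff_subset)) := by
      refine disjE (τ := y.1) ?_ ?_ ?_
      · rw [cycD (memT y hy)]; exact memT y hy
      · rw [cycD (Finset.sdiff_subset)]; exact Finset.sdiff_subset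
      · rw [cycD (memT y hy), cycD (Finset.sdiff_subset)]
        exact Finset.disjoint_sdiff
    rw [Finset.mem_sigma]
    exact ⟨Finset.mem_univ _, mem_Dfilter.mpr fun i hi => (hd i).resolve_left hi⟩
  · -- left_inv
    intro x hx
    have hset : (x.1 * x.2).cycleFactorsFinset \ x.1.cycleFactorsFinset
        = x.2.cycleFactorsFinset := by
      rw [(memS x hx).cycleFactorsFinset_mul_eq_union,
        Finset.union_sdiff_cancel_left (memS x hx).disjoint_cycleFactorsFinset]
    refine Sigma.ext ?_ (heq_of_eq ?_)
    · exact Equiv.Perm.cycleFactorsFinset_noncommProd x.1 (commS subset_rfl)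
    · show ((x.1 * x.2).cycleFactorsFinset \ x.1.cycleFactorsFinset).noncommProd id
        (commS Finset.sdiff_subset) = x.2
      simp only [hset]
      exact Equiv.Perm.cycleFactorsFinset_noncommProd x.2 (commS subset_rfl)
  · -- right_inv
    intro y hy
    have hset : y.2 ∪ (y.1.cycleFactorsFinset \ y.2) = y.1.cycleFactorsFinset :=
      Finset.union_sdiff_of_subset (memT y hy)
    refine Sigma.ext ?_ (heq_of_eq ?_)
    · show y.2.noncommProd id (commS (memT y hy)) *
        (y.1.cycleFactorsFinset \ y.2).noncommProd id (commS Finset.sdiff_subset) = y.1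
      rw [← Finset.noncommProd_union_of_disjoint Finset.disjoint_sdiff id
        (by rw [hset]; exact commS le_rfl)]
      · simp only [hset]
        exact Equiv.Perm.cycleFactorsFinset_noncommProd y.1 (commS subset_rfl)
    · exact cycD (memT y hy)
  · -- values
    intro x hx
    have hset : (x.1 * x.2).cycleFactorsFinset \ x.1.cycleFactorsFinset
        = x.2.cycleFactorsFinset := by
      rw [(memS x hx).cycleFactorsFinset_mul_eq_union,
        Finset.union_sdiff_cancel_left (memS x hx).disjoint_cycleFactorsFinset]
    show _ = _ * ((∏ c ∈ x.1.cycleFactorsFinset, 2 * u ^ c.support.card) * _)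
    rw [hset]
    ring

end Aux

private lemma prodFin {n : ℕ} (π : Equiv.Perm (Fin n)) (w : ℕ → ℂ) :
    ∏ ℓ ∈ Finset.Icc 2 n, w ℓ ^ (π.cycleType.count ℓ)
      = ∏ c ∈ π.cycleFactorsFinset, w c.support.card := by
  have := (prodA π w).trans (prodB π w)
  rwa [Fintype.card_fin] at this

set_option maxHeartbeats 1000000 in
/-- Reorganizing the double sum over permutations of `{1,…,n}` together with
permutations of the fixed-point set into a single cycle-index expression. -/
theorem cycle_index_reorganization (n : ℕ) (hn : 1 ≤ n) (a u v : ℂ) :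
    ∑ σ : Equiv.Perm (Fin n),
      (∏ ℓ ∈ Finset.Icc 2 n, (2 * u ^ ℓ) ^ (σ.cycleType.count ℓ)) *
      (∑ ρ : Equiv.Perm {i : Fin n // σ i = i},
        a ^ (Finset.univ.filter fun i : {i : Fin n // σ i = i} => ρ i = i).card *
          ∏ ℓ ∈ Finset.Icc 2 (Fintype.card {i : Fin n // σ i = i}),
            (v ^ ℓ) ^ (ρ.cycleType.count ℓ))
    = ∑ τ : Equiv.Perm (Fin n),
        a ^ (Finset.univ.filter fun i : Fin n => τ i = i).card *
          ∏ ℓ ∈ Finset.Icc 2 n, (2 * u ^ ℓ + v ^ ℓ) ^ (τ.cycleType.count ℓ) := by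
  have lhs1 : ∀ σ : Equiv.Perm (Fin n),
      (∏ ℓ ∈ Finset.Icc 2 n, (2 * u ^ ℓ) ^ (σ.cycleType.count ℓ)) *
      (∑ ρ : Equiv.Perm {i : Fin n // σ i = i},
        a ^ (Finset.univ.filter fun i : {i : Fin n // σ i = i} => ρ i = i).card *
          ∏ ℓ ∈ Finset.Icc 2 (Fintype.card {i : Fin n // σ i = i}),
            (v ^ ℓ) ^ (ρ.cycleType.count ℓ))
      = ∑ ρ' ∈ Dfilter σ,
        (∏ c ∈ σ.cycleFactorsFinset, 2 * u ^ c.support.card) *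
          (a ^ (Finset.univ.filter fun i : Fin n => (σ * ρ') i = i).card *
            ∏ c ∈ ρ'.cycleFactorsFinset, v ^ c.support.card) := by
    intro σ
    rw [prodFin σ (fun ℓ => 2 * u ^ ℓ), innerSum σ a v, Finset.mul_sum]
  have rhs1 : ∀ τ : Equiv.Perm (Fin n),
      a ^ (Finset.univ.filter fun i : Fin n => τ i = i).card *
        ∏ ℓ ∈ Finset.Icc 2 n, (2 * u ^ ℓ + v ^ ℓ) ^ (τ.cycleType.count ℓ)
      = ∑ S ∈ τ.cycleFactorsFinset.powerset,
          a ^ (Finset.univ.filter fun i : Fin n => τ i = i).card *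
            ((∏ c ∈ S, 2 * u ^ c.support.card) *
              ∏ c ∈ τ.cycleFactorsFinset \ S, v ^ c.support.card) := by
    intro τ
    rw [prodFin τ (fun ℓ => 2 * u ^ ℓ + v ^ ℓ), Finset.prod_add, Finset.mul_sum]
  exact (Finset.sum_congr rfl fun σ _ => lhs1 σ).trans
    ((bijMain a u v).trans (Finset.sum_congr rfl fun τ _ => (rhs1 τ).symm))
end

section
/- Let a ∈ ℝ, b > 0, and let m be a real number that is not a nonpositive integer. Then Ψ_n(a,b,m) ~ (n!)² · b^n · e^{a/b − m} · n^{m−1} / Γ(m) as n → ∞; that is, lim_{n→∞} Ψ_n(a,b,m) / ( (n!)² · b^n · n^{m−1} ) = e^{a/b − m} / Γ(m), where Γ is the Gamma function. -/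
open scoped BigOperators

/-- Number of fixed points of a permutation, i.e. `c₁(σ)`. -/
def fixedPointCount {α : Type*} [DecidableEq α] [Fintype α] (σ : Equiv.Perm α) : ℕ :=
  (Finset.univ.filter fun i => σ i = i).card

/-- `Ψ_n(a,b,m) = n! ∑_{σ ∈ S_n} a^{c₁(σ)} ∏_{ℓ=2}^n (m b^ℓ)^{c_ℓ(σ)}`. -/
noncomputable def Psi (a b m : ℝ) (n : ℕ) : ℝ :=
  (n.factorial : ℝ) * ∑ σ : Equiv.Perm (Fin n),
    a ^ fixedPointCount σ *
      ∏ ℓ ∈ Finset.Icc 2 n, (m * b ^ ℓ) ^ (σ.cycleType.count ℓ)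


open Equiv Equiv.Perm Finset

variable {α : Type*} [DecidableEq α] [Fintype α]

lemma support_swap_mul_of_fixed {g : Perm α} {a b : α} (ha : g a = a) (hb : g b ≠ b) :
    (swap a b * g).support = insert a g.support := by
  have hab : a ≠ b := fun h => hb (h ▸ ha)
  ext x
  simp only [Finset.mem_insert, Equiv.Perm.mem_support, Equiv.Perm.mul_apply]
  constructor
  · intro hx
    by_contra hcon
    push_neg at hcon
    obtain ⟨hxa, hgx⟩ := hcon
    rw [hgx] at hx
    have hxb : x ≠ b := fun h => hb (h ▸ hgx)
    exact hx (swap_apply_of_ne_of_ne hxa hxb)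
  · rintro (rfl | hgx)
    · rw [ha, swap_apply_left]
      exact fun h => hb (h ▸ ha)
    · have h1 : g x ≠ a := fun h => hgx (by rw [← ha] at h; exact (g.injective h ▸ ha))
      by_cases h2 : g x = b
      · rw [h2, swap_apply_right]
        intro h; exact hgx (h ▸ ha)
      · rw [swap_apply_of_ne_of_ne h1 h2]; exact hgx

lemma isCycle_swap_mul_of_fixed {c : Perm α} (hc : c.IsCycle) {a b : α} (ha : c a = a)
    (hb : c b ≠ b) : (swap a b * c).IsCycle := by
  have hab : a ≠ b := fun h => hb (h ▸ ha)
  have hane : a ∉ c.support := by simp [ha]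
  refine ⟨a, ?_, ?_⟩
  · rw [mul_apply, ha, swap_apply_left]; exact hab.symm
  · intro y hy
    have hy' : y = a ∨ c y ≠ y := by
      have := (support_swap_mul_of_fixed ha hb) ▸ (mem_support.2 hy)
      simpa using this
    -- key claim
    have key : ∀ k : ℕ, (swap a b * c).SameCycle a ((c ^ k) b) := by
      intro k
      induction k with
      | zero =>
        exact ⟨1, by simp [mul_apply, ha, swap_apply_left]⟩
      | succ k ih =>
        by_cases hcz : c ((c ^ k) b) = b
        · rw [pow_succ', mul_apply, hcz]
          exact ⟨1, by simp [mul_apply, ha, swap_apply_left]⟩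
        · have hzmem : (c ^ k) b ∈ c.support := pow_apply_mem_support.2 (mem_support.2 hb)
          have hcz2 : c ((c ^ k) b) ∈ c.support := apply_mem_support.2 hzmem
          have hcza : c ((c ^ k) b) ≠ a := fun h => hane (h ▸ hcz2)
          have : (swap a b * c) ((c ^ k) b) = c ((c ^ k) b) := by
            rw [mul_apply, swap_apply_of_ne_of_ne hcza hcz]
          have h2 : (swap a b * c).SameCycle a ((swap a b * c) ((c ^ k) b)) :=
            sameCycle_apply_right.2 ih
          rw [this] at h2
          rw [pow_succ', mul_apply]
          exact h2
    rcases hy' with rfl | hy'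
    · exact SameCycle.refl _ _
    · obtain ⟨i, _, _, hi⟩ := SameCycle.exists_pow_eq c (hc.sameCycle hb hy')
      exact hi ▸ key i

lemma cycleType_swap_mul_of_mem {g : Perm α} {a b : α} (ha : g a = a) (hb : g b ≠ b) :
    ∃ s : Multiset ℕ, g.cycleType = (g.cycleOf b).support.card ::ₘ s ∧
      (swap a b * g).cycleType = ((g.cycleOf b).support.card + 1) ::ₘ s := by
  have hab : a ≠ b := fun h => hb (h ▸ ha)
  set c := g.cycleOf b with hcdef
  set ρ := c⁻¹ * g with hρdef
  have hc : c.IsCycle := isCycle_cycleOf g hb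
  have hnsc : ¬ g.SameCycle b a := by
    rintro ⟨i, hi⟩
    have h2 : (g ^ i) a = a := zpow_apply_eq_self_of_apply_eq_self ha i
    have : b = a := (g ^ i).injective (hi.trans h2.symm)
    exact hb (this ▸ ha)
  have hca : c a = a := by rw [hcdef, cycleOf_apply, if_neg hnsc]
  have hcb : c b = g b := cycleOf_apply_self g b
  have hcbne : c b ≠ b := hcb ▸ hb
  have hgeq : g = c * ρ := by rw [hρdef]; group
  have hdisj : c.Disjoint ρ := by
    intro x
    by_cases h : g.SameCycle b x
    · right
      have hcx : c x = g x := by rw [hcdef, cycleOf_apply, if_pos h]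
      rw [hρdef, mul_apply, ← hcx, Equiv.Perm.inv_def, Equiv.symm_apply_apply]
    · left; rw [hcdef, cycleOf_apply, if_neg h]
  have hρa : ρ a = a := by
    rw [hρdef, mul_apply, ha, Equiv.Perm.inv_eq_iff_eq]
    exact hca.symm
  have hρb : ρ b = b := by
    rcases hdisj b with h | h
    · exact absurd h hcbne
    · exact h
  have hθ : (swap a b * c).IsCycle := isCycle_swap_mul_of_fixed hc hca hcbne
  have hθsupp : (swap a b * c).support = insert a c.support := support_swap_mul_of_fixed hca hcbne
  have hane : a ∉ c.support := by simp [hca]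
  have hθcard : (swap a b * c).support.card = c.support.card + 1 := by
    rw [hθsupp, Finset.card_insert_of_notMem hane]
  have hdisj2 : (swap a b * c).Disjoint ρ := by
    intro x
    by_cases hx : ρ x = x
    · right; exact hx
    · left
      have hxa : x ≠ a := fun h => hx (h ▸ hρa)
      have hxb : x ≠ b := fun h => hx (h ▸ hρb)
      have hcx : c x = x := (hdisj x).resolve_right hx
      rw [mul_apply, hcx, swap_apply_of_ne_of_ne hxa hxb]
  refine ⟨ρ.cycleType, ?_, ?_⟩
  · conv_lhs => rw [hgeq]
    rw [Equiv.Perm.Disjoint.cycleType_mul hdisj, hc.cycleType]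
    simp
  · have : swap a b * g = (swap a b * c) * ρ := by rw [hgeq]; group
    rw [this, Equiv.Perm.Disjoint.cycleType_mul hdisj2, hθ.cycleType, hθcard]
    simp

lemma cycleType_swap_mul_of_fixed {g : Perm α} {a b : α} (ha : g a = a) (hb : g b = b)
    (hab : a ≠ b) : (swap a b * g).cycleType = 2 ::ₘ g.cycleType := by
  have hdisj : (swap a b).Disjoint g := by
    intro x
    by_cases hx : x = a
    · right; exact hx ▸ ha
    · by_cases hx' : x = b
      · right; exact hx' ▸ hb
      · left; exact swap_apply_of_ne_of_ne hx hx'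
  rw [Equiv.Perm.Disjoint.cycleType_mul hdisj, (isCycle_swap hab).cycleType, card_support_swap hab]
  simp


/-- Extension of a permutation of `Fin n` to `Fin (n+1)` fixing `0`. -/
def extFin {n : ℕ} (τ : Perm (Fin n)) : Perm (Fin (n + 1)) :=
  Equiv.Perm.decomposeFin.symm (0, τ)

lemma extFin_zero {n : ℕ} (τ : Perm (Fin n)) : extFin τ 0 = 0 :=
  Equiv.Perm.decomposeFin_symm_apply_zero 0 τ

lemma extFin_succ {n : ℕ} (τ : Perm (Fin n)) (x : Fin n) : extFin τ x.succ = (τ x).succ := by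
  rw [extFin, Equiv.Perm.decomposeFin_symm_apply_succ, Equiv.swap_self]
  rfl

lemma decomposeFin_symm_eq {n : ℕ} (p : Fin (n + 1)) (τ : Perm (Fin n)) :
    Equiv.Perm.decomposeFin.symm (p, τ) = swap 0 p * extFin τ := by
  ext x
  refine Fin.cases ?_ ?_ x
  · rw [Equiv.Perm.decomposeFin_symm_apply_zero, mul_apply, extFin_zero, swap_apply_left]
  · intro y
    rw [Equiv.Perm.decomposeFin_symm_apply_succ, mul_apply, extFin_succ]

/-- equivalence between `Fin n` and nonzero elements of `Fin (n+1)`. -/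
def finSuccAux (n : ℕ) : Fin n ≃ {i : Fin (n + 1) // i ≠ 0} where
  toFun x := ⟨x.succ, Fin.succ_ne_zero x⟩
  invFun i := i.1.pred i.2
  left_inv x := by simp
  right_inv i := by cases i with | mk i h => simp [Fin.succ_pred]

lemma extFin_eq_extendDomain {n : ℕ} (τ : Perm (Fin n)) :
    extFin τ = τ.extendDomain (finSuccAux n) := by
  ext x
  refine Fin.cases ?_ ?_ x
  · rw [extFin_zero, Equiv.Perm.extendDomain_apply_not_subtype]
    simp
  · intro y
    rw [extFin_succ]
    have : (y.succ : Fin (n + 1)) = ((finSuccAux n) y : Fin (n + 1)) := rfl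
    rw [this, Equiv.Perm.extendDomain_apply_image]
    rfl

lemma cycleType_extFin {n : ℕ} (τ : Perm (Fin n)) : (extFin τ).cycleType = τ.cycleType := by
  rw [extFin_eq_extendDomain]
  exact Equiv.Perm.cycleType_extendDomain (finSuccAux n)

lemma card_support_extFin {n : ℕ} (τ : Perm (Fin n)) :
    (extFin τ).support.card = τ.support.card := by
  rw [← Equiv.Perm.sum_cycleType, ← Equiv.Perm.sum_cycleType, cycleType_extFin]
section Weights
variable (a b m : ℝ)

noncomputable def wgt {n : ℕ} (σ : Perm (Fin n)) : ℝ :=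
  a ^ (n - σ.support.card) * (m ^ (Multiset.card σ.cycleType) * b ^ σ.support.card)

noncomputable def hwt {n : ℕ} (σ : Perm (Fin n)) : ℝ :=
  a ^ (n - σ.support.card - 1) * (m ^ (Multiset.card σ.cycleType) * b ^ σ.support.card)

noncomputable def Wc (n : ℕ) : ℝ := ∑ σ : Perm (Fin n), wgt a b m σ

noncomputable def Sc (n : ℕ) : ℝ := ∑ σ : Perm (Fin n), (fixedPointCount σ : ℝ) * hwt a b m σ

variable {n : ℕ}

lemma supp_le (σ : Perm (Fin n)) : σ.support.card ≤ n := by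
  simpa using Finset.card_le_univ σ.support

lemma fixedPointCount_eq (σ : Perm (Fin n)) : fixedPointCount σ = n - σ.support.card := by
  have hsupp : σ.support = Finset.univ.filter (fun i => ¬ σ i = i) := by
    ext x; simp [Equiv.Perm.mem_support]
  rw [fixedPointCount, hsupp]
  have h := Finset.card_filter_add_card_filter_not (s := (Finset.univ : Finset (Fin n)))
    (p := fun i => σ i = i)
  simp only [Finset.card_univ, Fintype.card_fin] at h
  omega

lemma supp_lt_of_fixed {σ : Perm (Fin n)} {x : Fin n} (hx : σ x = x) :
    σ.support.card + 1 ≤ n := by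
  have h1 : σ.support ⊆ Finset.univ.erase x := by
    intro y hy
    refine Finset.mem_erase.2 ⟨?_, Finset.mem_univ y⟩
    rintro rfl
    exact (Equiv.Perm.mem_support.1 hy) hx
  have h2 := Finset.card_le_card h1
  rw [Finset.card_erase_of_mem (Finset.mem_univ x), Finset.card_univ, Fintype.card_fin] at h2
  have h3 : 1 ≤ n := Nat.one_le_iff_ne_zero.2 (by rintro rfl; exact x.elim0)
  omega

lemma wgt_extFin (τ : Perm (Fin n)) : wgt a b m (extFin τ) = a * wgt a b m τ := by
  rw [wgt, wgt, card_support_extFin, cycleType_extFin]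
  have h : n + 1 - τ.support.card = (n - τ.support.card) + 1 := by
    have := supp_le τ; omega
  rw [h, pow_succ]
  ring

lemma hwt_extFin (τ : Perm (Fin n)) : hwt a b m (extFin τ) = wgt a b m τ := by
  rw [hwt, wgt, card_support_extFin, cycleType_extFin]
  have h : n + 1 - τ.support.card - 1 = n - τ.support.card := by
    have := supp_le τ; omega
  rw [h]

lemma wgt_insert_fixed {τ : Perm (Fin n)} {x : Fin n} (hx : τ x = x) :
    wgt a b m (Equiv.Perm.decomposeFin.symm (x.succ, τ)) = (m * b ^ 2) * hwt a b m τ := by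
  rw [decomposeFin_symm_eq]
  have h0 : (extFin τ) 0 = 0 := extFin_zero τ
  have hb0 : (extFin τ) x.succ = x.succ := by rw [extFin_succ, hx]
  have hne : (0 : Fin (n+1)) ≠ x.succ := (Fin.succ_ne_zero x).symm
  have hct : (swap (0 : Fin (n+1)) x.succ * extFin τ).cycleType = 2 ::ₘ (extFin τ).cycleType :=
    cycleType_swap_mul_of_fixed h0 hb0 hne
  have hsum : (swap (0 : Fin (n+1)) x.succ * extFin τ).support.card = τ.support.card + 2 := by
    have hL := Equiv.Perm.sum_cycleType (swap (0 : Fin (n+1)) x.succ * extFin τ)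
    rw [hct, Multiset.sum_cons, Equiv.Perm.sum_cycleType] at hL
    have := card_support_extFin τ
    omega
  have hcard : Multiset.card (swap (0 : Fin (n+1)) x.succ * extFin τ).cycleType
      = Multiset.card τ.cycleType + 1 := by
    rw [hct, Multiset.card_cons, cycleType_extFin]
  rw [wgt, hwt, hsum, hcard]
  have hle := supp_lt_of_fixed hx
  set k := n - τ.support.card - 1 with hk
  have h1 : n + 1 - (τ.support.card + 2) = k := by omega
  rw [h1, pow_succ, pow_succ]
  ring

lemma wgt_insert_moved {τ : Perm (Fin n)} {x : Fin n} (hx : τ x ≠ x) :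
    wgt a b m (Equiv.Perm.decomposeFin.symm (x.succ, τ)) = b * wgt a b m τ := by
  rw [decomposeFin_symm_eq]
  have h0 : (extFin τ) 0 = 0 := extFin_zero τ
  have hb0 : (extFin τ) x.succ ≠ x.succ := by
    rw [extFin_succ]
    exact fun h => hx (Fin.succ_injective n h)
  obtain ⟨s, hs1, hs2⟩ := cycleType_swap_mul_of_mem h0 hb0
  have hcyc : Multiset.card (swap (0 : Fin (n+1)) x.succ * extFin τ).cycleType
      = Multiset.card τ.cycleType := by
    rw [hs2, Multiset.card_cons, ← cycleType_extFin τ, hs1, Multiset.card_cons]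
  have hsum : (swap (0 : Fin (n+1)) x.succ * extFin τ).support.card = τ.support.card + 1 := by
    have hL := Equiv.Perm.sum_cycleType (swap (0 : Fin (n+1)) x.succ * extFin τ)
    rw [hs2, Multiset.sum_cons] at hL
    have hK := Equiv.Perm.sum_cycleType (extFin τ)
    rw [hs1, Multiset.sum_cons] at hK
    have := card_support_extFin τ
    omega
  rw [wgt, wgt, hsum, hcyc]
  have h2 := supp_le τ
  set k := n - τ.support.card with hk
  have h1 : n + 1 - (τ.support.card + 1) = k := by omega
  rw [h1, pow_succ]
  ring

lemma fp_mul_wgt (τ : Perm (Fin n)) :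
    (fixedPointCount τ : ℝ) * wgt a b m τ = a * ((fixedPointCount τ : ℝ) * hwt a b m τ) := by
  by_cases h : τ.support.card = n
  · rw [fixedPointCount_eq, h, Nat.sub_self]
    simp
  · have hlt : τ.support.card < n := lt_of_le_of_ne (supp_le τ) h
    rw [wgt, hwt]
    set k := n - τ.support.card - 1 with hk
    have h1 : n - τ.support.card = k + 1 := by omega
    rw [h1, pow_succ]
    ring

lemma Wc_succ : Wc a b m (n + 1) =
    a * Wc a b m n + b * (n : ℝ) * Wc a b m n + (m * b ^ 2 - a * b) * Sc a b m n := by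
  have h1 : Wc a b m (n+1) = ∑ q : Fin (n+1) × Perm (Fin n),
      wgt a b m (Equiv.Perm.decomposeFin.symm q) :=
    (Equiv.sum_comp Equiv.Perm.decomposeFin.symm (wgt a b m)).symm
  rw [h1, Fintype.sum_prod_type, Fin.sum_univ_succ]
  have h2 : ∀ τ : Perm (Fin n), wgt a b m (Equiv.Perm.decomposeFin.symm (0, τ))
      = a * wgt a b m τ := fun τ => wgt_extFin a b m τ
  rw [Finset.sum_congr rfl (fun τ _ => h2 τ), ← Finset.mul_sum, Finset.sum_comm]
  have h3 : ∀ τ : Perm (Fin n), ∑ x : Fin n, wgt a b m (Equiv.Perm.decomposeFin.symm (x.succ, τ))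
      = (fixedPointCount τ : ℝ) * ((m * b^2) * hwt a b m τ)
        + (τ.support.card : ℝ) * (b * wgt a b m τ) := by
    intro τ
    rw [← Finset.sum_filter_add_sum_filter_not Finset.univ (fun x => τ x = x)]
    have hA : ∑ x ∈ Finset.univ.filter (fun x => τ x = x),
        wgt a b m (Equiv.Perm.decomposeFin.symm (x.succ, τ))
        = (fixedPointCount τ : ℝ) * ((m * b^2) * hwt a b m τ) := by
      rw [Finset.sum_congr rfl (fun x hx => wgt_insert_fixed a b m ((Finset.mem_filter.1 hx).2)),
        Finset.sum_const, fixedPointCount, nsmul_eq_mul]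
    have hB : ∑ x ∈ Finset.univ.filter (fun x => ¬ τ x = x),
        wgt a b m (Equiv.Perm.decomposeFin.symm (x.succ, τ))
        = (τ.support.card : ℝ) * (b * wgt a b m τ) := by
      have hsupp : Finset.univ.filter (fun x => ¬ τ x = x) = τ.support := by
        ext y; simp [Equiv.Perm.mem_support]
      rw [Finset.sum_congr rfl (fun x hx => wgt_insert_moved a b m ((Finset.mem_filter.1 hx).2)),
        Finset.sum_const, hsupp, nsmul_eq_mul]
    rw [hA, hB]
  rw [Finset.sum_congr rfl (fun τ _ => h3 τ), Finset.sum_add_distrib]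
  have h4 : ∑ τ : Perm (Fin n), (fixedPointCount τ : ℝ) * ((m * b^2) * hwt a b m τ)
      = (m * b^2) * Sc a b m n := by
    rw [Sc, Finset.mul_sum]
    exact Finset.sum_congr rfl (fun τ _ => by ring)
  have h5 : ∑ τ : Perm (Fin n), (τ.support.card : ℝ) * (b * wgt a b m τ)
      = b * ((n:ℝ) * Wc a b m n - a * Sc a b m n) := by
    have e1 : ∀ τ : Perm (Fin n), (τ.support.card : ℝ) * (b * wgt a b m τ)
        = b * ((n:ℝ) * wgt a b m τ - a * ((fixedPointCount τ : ℝ) * hwt a b m τ)) := by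
      intro τ
      have hfs : (τ.support.card : ℝ) = (n:ℝ) - (fixedPointCount τ : ℝ) := by
        rw [fixedPointCount_eq, Nat.cast_sub (supp_le τ)]
        ring
      rw [← fp_mul_wgt, hfs]
      ring
    rw [Finset.sum_congr rfl (fun τ _ => e1 τ), ← Finset.mul_sum, Finset.sum_sub_distrib,
      ← Finset.mul_sum, ← Finset.mul_sum, Wc, Sc]
  rw [h4, h5, show (∑ i : Perm (Fin n), wgt a b m i) = Wc a b m n from rfl]
  ring
end Weights
section Weights2
variable (a b m : ℝ) {n : ℕ}

lemma inner_conj (x : Fin (n + 1)) :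
    ∑ σ : Perm (Fin (n + 1)), (if σ x = x then hwt a b m σ else 0)
      = ∑ σ : Perm (Fin (n + 1)), (if σ 0 = 0 then hwt a b m σ else 0) := by
  set π : Perm (Fin (n + 1)) := swap 0 x with hπ
  let e : Perm (Fin (n + 1)) ≃ Perm (Fin (n + 1)) :=
    (Equiv.mulLeft π).trans (Equiv.mulRight π⁻¹)
  have key := Equiv.sum_comp e (fun σ : Perm (Fin (n+1)) => if σ x = x then hwt a b m σ else 0)
  rw [← key]
  refine Finset.sum_congr rfl (fun σ _ => ?_)
  have he : e σ = π * σ * π⁻¹ := rfl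
  have hct : (π * σ * π⁻¹).cycleType = σ.cycleType := Equiv.Perm.cycleType_conj
  have hsupp : (π * σ * π⁻¹).support.card = σ.support.card := by
    rw [← Equiv.Perm.sum_cycleType, hct, Equiv.Perm.sum_cycleType]
  have hhwt : hwt a b m (π * σ * π⁻¹) = hwt a b m σ := by
    rw [hwt, hwt, hct, hsupp]
  have hcond : ((π * σ * π⁻¹) x = x) ↔ (σ 0 = 0) := by
    have hπx : π⁻¹ x = 0 := by rw [hπ, Equiv.swap_inv, Equiv.swap_apply_right]
    have hπ0 : π 0 = x := by rw [hπ, Equiv.swap_apply_left]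
    rw [Equiv.Perm.mul_apply, Equiv.Perm.mul_apply, hπx]
    constructor
    · intro h
      rw [← hπ0] at h
      exact π.injective h
    · intro h; rw [h, hπ0]
  rw [he, hhwt]
  simp only [hcond]

lemma inner_zero :
    ∑ σ : Perm (Fin (n + 1)), (if σ 0 = 0 then hwt a b m σ else 0) = Wc a b m n := by
  have h1 : ∑ σ : Perm (Fin (n + 1)), (if σ 0 = 0 then hwt a b m σ else 0)
      = ∑ q : Fin (n+1) × Perm (Fin n),
        (if Equiv.Perm.decomposeFin.symm q 0 = 0 then hwt a b m (Equiv.Perm.decomposeFin.symm q) else 0) :=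
    (Equiv.sum_comp Equiv.Perm.decomposeFin.symm _).symm
  rw [h1, Fintype.sum_prod_type, Fin.sum_univ_succ]
  have h2 : ∀ τ : Perm (Fin n),
      (if Equiv.Perm.decomposeFin.symm ((0 : Fin (n+1)), τ) 0 = 0 then
        hwt a b m (Equiv.Perm.decomposeFin.symm (0, τ)) else 0) = wgt a b m τ := by
    intro τ
    rw [Equiv.Perm.decomposeFin_symm_apply_zero, if_pos rfl]
    exact hwt_extFin a b m τ
  rw [Finset.sum_congr rfl (fun τ _ => h2 τ)]
  have h3 : ∀ x : Fin n, ∑ τ : Perm (Fin n),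
      (if Equiv.Perm.decomposeFin.symm (x.succ, τ) 0 = 0 then
        hwt a b m (Equiv.Perm.decomposeFin.symm (x.succ, τ)) else 0) = 0 := by
    intro x
    refine Finset.sum_eq_zero (fun τ _ => ?_)
    rw [Equiv.Perm.decomposeFin_symm_apply_zero, if_neg (Fin.succ_ne_zero x)]
  rw [Finset.sum_congr rfl (fun x _ => h3 x), Finset.sum_const, smul_zero, add_zero, Wc]

lemma Sc_succ : Sc a b m (n + 1) = ((n : ℝ) + 1) * Wc a b m n := by
  have h1 : ∀ σ : Perm (Fin (n+1)), (fixedPointCount σ : ℝ) * hwt a b m σ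
      = ∑ x : Fin (n+1), (if σ x = x then hwt a b m σ else 0) := by
    intro σ
    rw [fixedPointCount, Finset.card_filter]
    push_cast
    rw [Finset.sum_mul]
    refine Finset.sum_congr rfl (fun x _ => ?_)
    by_cases h : σ x = x <;> simp [h]
  rw [Sc, Finset.sum_congr rfl (fun σ _ => h1 σ), Finset.sum_comm,
    Finset.sum_congr rfl (fun x _ => (inner_conj a b m x).trans (inner_zero a b m)),
    Finset.sum_const, Finset.card_univ, Fintype.card_fin, nsmul_eq_mul]
  push_cast
  ring

lemma wgt_one_perm : wgt a b m (1 : Perm (Fin n)) = a ^ n := by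
  rw [wgt, Equiv.Perm.support_one, Equiv.Perm.cycleType_one]
  simp

lemma Wc_zero : Wc a b m 0 = 1 := by
  haveI : Subsingleton (Perm (Fin 0)) := ⟨fun σ τ => Equiv.ext fun x => x.elim0⟩
  rw [Wc, Fintype.sum_subsingleton _ (1 : Perm (Fin 0)), wgt_one_perm, pow_zero]

lemma Wc_one : Wc a b m 1 = a := by
  haveI : Subsingleton (Perm (Fin 1)) := ⟨fun σ τ => Equiv.ext fun x => Subsingleton.elim _ _⟩
  rw [Wc, Fintype.sum_subsingleton _ (1 : Perm (Fin 1)), wgt_one_perm, pow_one]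

lemma Wc_rec (n : ℕ) : Wc a b m (n + 2) = (a + b * ((n:ℝ) + 1)) * Wc a b m (n + 1)
    + (m * b ^ 2 - a * b) * ((n : ℝ) + 1) * Wc a b m n := by
  have h := Wc_succ a b m (n := n + 1)
  rw [Sc_succ] at h
  push_cast at h
  rw [h]
  ring
end Weights2

section Bridge
variable (a b m : ℝ) {n : ℕ}

lemma mprod (s : Multiset ℕ) :
    (Multiset.map (fun ℓ => m * b ^ ℓ) s).prod = m ^ Multiset.card s * b ^ s.sum := by
  induction s using Multiset.induction_on with
  | empty => simp
  | cons x s ih =>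
    rw [Multiset.map_cons, Multiset.prod_cons, ih, Multiset.card_cons, Multiset.sum_cons,
      pow_succ, pow_add]
    ring

lemma per_sigma (σ : Perm (Fin n)) :
    ∏ ℓ ∈ Finset.Icc 2 n, (m * b ^ ℓ) ^ (σ.cycleType.count ℓ)
      = m ^ (Multiset.card σ.cycleType) * b ^ σ.support.card := by
  have hsub : σ.cycleType.toFinset ⊆ Finset.Icc 2 n := by
    intro ℓ hℓ
    rw [Multiset.mem_toFinset] at hℓ
    refine Finset.mem_Icc.2 ⟨Equiv.Perm.two_le_of_mem_cycleType hℓ, ?_⟩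
    calc ℓ ≤ σ.cycleType.sum := Multiset.le_sum_of_mem hℓ
      _ = σ.support.card := Equiv.Perm.sum_cycleType σ
      _ ≤ n := supp_le σ
  have h1 : ∏ ℓ ∈ Finset.Icc 2 n, (m * b ^ ℓ) ^ (σ.cycleType.count ℓ)
      = ∏ ℓ ∈ σ.cycleType.toFinset, (m * b ^ ℓ) ^ (σ.cycleType.count ℓ) :=
    (Finset.prod_subset hsub (fun ℓ _ hℓ => by
      rw [Multiset.count_eq_zero_of_notMem (fun hcon => hℓ (Multiset.mem_toFinset.2 hcon)),
        pow_zero])).symm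
  rw [h1, ← Finset.prod_multiset_map_count, mprod, Equiv.Perm.sum_cycleType]

lemma Psi_eq_Wc : Psi a b m n = (n.factorial : ℝ) * Wc a b m n := by
  rw [Psi, Wc]
  congr 1
  refine Finset.sum_congr rfl (fun σ _ => ?_)
  rw [per_sigma, wgt, fixedPointCount_eq]
end Bridge

section ClosedForm
variable (a b m : ℝ)

noncomputable def Aseq (m : ℝ) (k : ℕ) : ℝ := (∏ i ∈ Finset.range k, (m + i)) / k.factorial

noncomputable def Bseq (b m : ℝ) (k : ℕ) : ℝ := b ^ k * Aseq m k

noncomputable def Useq (a b m : ℝ) (n : ℕ) : ℝ :=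
  ∑ j ∈ Finset.range (n + 1), (a - m * b) ^ j / j.factorial * Bseq b m (n - j)

lemma Bseq_succ (k : ℕ) : ((k:ℝ) + 1) * Bseq b m (k + 1) = b * (m + k) * Bseq b m k := by
  have hk : (k.factorial : ℝ) ≠ 0 := Nat.cast_ne_zero.2 k.factorial_ne_zero
  have hk1 : ((k:ℝ) + 1) ≠ 0 := by positivity
  rw [Bseq, Bseq, Aseq, Aseq, Finset.prod_range_succ, Nat.factorial_succ]
  push_cast
  field_simp
  ring

lemma Useq_zero : Useq a b m 0 = 1 := by
  simp [Useq, Bseq, Aseq]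

lemma Useq_one : Useq a b m 1 = a := by
  rw [Useq]
  rw [Finset.sum_range_succ, Finset.sum_range_succ, Finset.sum_range_zero]
  simp [Bseq, Aseq]
  ring

lemma shiftSum (n : ℕ) :
    ∑ j ∈ Finset.range (n + 2), (j:ℝ) * ((a - m*b) ^ j / j.factorial * Bseq b m (n + 1 - j))
      = (a - m*b) * Useq a b m n := by
  rw [Finset.sum_range_succ']
  simp only [Nat.cast_zero, zero_mul, add_zero]
  rw [Useq, Finset.mul_sum]
  refine Finset.sum_congr rfl (fun j hj => ?_)
  have h1 : n + 1 - (j + 1) = n - j := by omega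
  have hf : (j.factorial : ℝ) ≠ 0 := Nat.cast_ne_zero.2 j.factorial_ne_zero
  have hj1 : ((j:ℝ) + 1) ≠ 0 := by positivity
  rw [h1, Nat.factorial_succ, pow_succ]
  push_cast
  field_simp

lemma Useq_rec (n : ℕ) : ((n:ℝ) + 2) * Useq a b m (n + 2)
    = (a + b * ((n:ℝ) + 1)) * Useq a b m (n + 1) + (m * b ^ 2 - a * b) * Useq a b m n := by
  have hsplit : ((n:ℝ) + 2) * Useq a b m (n + 2)
      = (∑ j ∈ Finset.range (n + 2 + 1),
          ((n + 2 - j : ℕ) : ℝ) * ((a - m*b) ^ j / j.factorial * Bseq b m (n + 2 - j)))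
        + (∑ j ∈ Finset.range (n + 2 + 1),
          (j:ℝ) * ((a - m*b) ^ j / j.factorial * Bseq b m (n + 2 - j))) := by
    rw [Useq, Finset.mul_sum, ← Finset.sum_add_distrib]
    refine Finset.sum_congr rfl (fun j hj => ?_)
    have hj' : j ≤ n + 2 := by have := Finset.mem_range.1 hj; omega
    have hcast : ((n + 2 - j : ℕ) : ℝ) = ((n:ℝ) + 2) - j := by
      rw [Nat.cast_sub hj']; push_cast; ring
    rw [hcast]
    ring
  have hsum2 : ∑ j ∈ Finset.range (n + 2 + 1),
      (j:ℝ) * ((a - m*b) ^ j / j.factorial * Bseq b m (n + 2 - j))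
      = (a - m*b) * Useq a b m (n + 1) := by
    exact shiftSum a b m (n + 1)
  have hsum1 : ∑ j ∈ Finset.range (n + 2 + 1),
      ((n + 2 - j : ℕ) : ℝ) * ((a - m*b) ^ j / j.factorial * Bseq b m (n + 2 - j))
      = b * m * Useq a b m (n + 1)
        + b * (((n:ℝ) + 1) * Useq a b m (n + 1) - (a - m*b) * Useq a b m n) := by
    rw [Finset.sum_range_succ]
    have hlast : ((n + 2 - (n + 2) : ℕ) : ℝ) = 0 := by simp
    rw [hlast, zero_mul, add_zero]
    have hmid : ∀ j ∈ Finset.range (n + 2),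
        ((n + 2 - j : ℕ) : ℝ) * ((a - m*b) ^ j / j.factorial * Bseq b m (n + 2 - j))
        = b * m * ((a - m*b) ^ j / j.factorial * Bseq b m (n + 1 - j))
          + b * (((n + 1 - j : ℕ) : ℝ) * ((a - m*b) ^ j / j.factorial * Bseq b m (n + 1 - j))) := by
      intro j hj
      have hj' : j ≤ n + 1 := by have := Finset.mem_range.1 hj; omega
      have e1 : n + 2 - j = (n + 1 - j) + 1 := by omega
      rw [e1]
      set k := n + 1 - j with hk
      have e2 := Bseq_succ b m k
      push_cast
      linear_combination ((a - m*b) ^ j / (j.factorial : ℝ)) * e2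
    rw [Finset.sum_congr rfl hmid, Finset.sum_add_distrib, ← Finset.mul_sum, ← Finset.mul_sum]
    have hU1 : ∑ j ∈ Finset.range (n + 2), (a - m*b) ^ j / j.factorial * Bseq b m (n + 1 - j)
        = Useq a b m (n + 1) := rfl
    have hsum3 : ∑ j ∈ Finset.range (n + 2),
        ((n + 1 - j : ℕ) : ℝ) * ((a - m*b) ^ j / j.factorial * Bseq b m (n + 1 - j))
        = ((n:ℝ) + 1) * Useq a b m (n + 1) - (a - m*b) * Useq a b m n := by
      have hterm : ∀ j ∈ Finset.range (n + 2),
          ((n + 1 - j : ℕ) : ℝ) * ((a - m*b) ^ j / j.factorial * Bseq b m (n + 1 - j))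
          = ((n:ℝ) + 1) * ((a - m*b) ^ j / j.factorial * Bseq b m (n + 1 - j))
            - (j : ℝ) * ((a - m*b) ^ j / j.factorial * Bseq b m (n + 1 - j)) := by
        intro j hj
        have hj' : j ≤ n + 1 := by have := Finset.mem_range.1 hj; omega
        have hcast : ((n + 1 - j : ℕ) : ℝ) = ((n:ℝ) + 1) - j := by
          rw [Nat.cast_sub hj']; push_cast; ring
        rw [hcast]; ring
      rw [Finset.sum_congr rfl hterm, Finset.sum_sub_distrib, ← Finset.mul_sum, hU1,
        shiftSum a b m n]
    rw [hU1, hsum3]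
  rw [hsplit, hsum1, hsum2]
  ring

lemma Wc_eq_factorial_mul_Useq : ∀ n : ℕ, Wc a b m n = (n.factorial : ℝ) * Useq a b m n := by
  intro n
  induction n using Nat.strong_induction_on with
  | _ n ih =>
    match n with
    | 0 => simp [Wc_zero, Useq_zero]
    | 1 => simp [Wc_one, Useq_one]
    | (k+2) =>
      have h1 := ih (k+1) (by omega)
      have h0 := ih k (by omega)
      have hrec := Wc_rec a b m k
      have hurec := Useq_rec a b m k
      rw [hrec, h1, h0]
      have hfact : (((k+2).factorial : ℕ) : ℝ) = ((k:ℝ) + 2) * (((k+1).factorial : ℕ) : ℝ) := by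
        rw [Nat.factorial_succ]; push_cast; ring
      have hfact1 : (((k+1).factorial : ℕ) : ℝ) = ((k:ℝ) + 1) * ((k.factorial : ℕ) : ℝ) := by
        rw [Nat.factorial_succ]; push_cast; ring
      rw [hfact]
      linear_combination (-(((k+1).factorial : ℕ) : ℝ)) * hurec
        - (m * b ^ 2 - a * b) * Useq a b m k * hfact1

lemma Psi_eq_Useq (n : ℕ) :
    Psi a b m n = (n.factorial : ℝ) * ((n.factorial : ℝ) * Useq a b m n) := by
  rw [Psi_eq_Wc, Wc_eq_factorial_mul_Useq]
end ClosedForm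
section Analysis
open Filter Real Topology

variable {m : ℝ}

lemma Gamma_ne (hm : ∀ k : ℕ, m ≠ -(k : ℝ)) : Real.Gamma m ≠ 0 := Real.Gamma_ne_zero hm

lemma prod_shift_ne (hm : ∀ k : ℕ, m ≠ -(k : ℝ)) (k : ℕ) : (∏ i ∈ Finset.range k, (m + (i:ℝ))) ≠ 0 := by
  rw [Finset.prod_ne_zero_iff]
  intro i _
  intro hcon
  exact hm i (by linarith)

lemma Aseq_tendsto (hm : ∀ k : ℕ, m ≠ -(k : ℝ)) :
    Tendsto (fun k : ℕ => Aseq m k * (k:ℝ) ^ (1 - m)) atTop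
      (𝓝 (1 / Real.Gamma m)) := by
  have h1 : Tendsto (fun k : ℕ => ((k:ℝ) / ((k:ℝ) + m)) * (Real.GammaSeq m k)⁻¹) atTop
      (𝓝 (1 * (Real.Gamma m)⁻¹)) :=
    (tendsto_natCast_div_add_atTop m).mul ((Real.GammaSeq_tendsto_Gamma m).inv₀ (Gamma_ne hm))
  rw [one_mul, ← one_div] at h1
  refine Tendsto.congr' ?_ h1
  filter_upwards [eventually_ge_atTop 1] with k hk
  have hk0 : (0:ℝ) < (k:ℝ) := by exact_mod_cast hk
  have hkm : (k:ℝ) + m ≠ 0 := by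
    intro hcon
    exact hm k (by linarith)
  have hprod := prod_shift_ne hm k
  have hfact : (k.factorial : ℝ) ≠ 0 := Nat.cast_ne_zero.2 k.factorial_ne_zero
  have hkm' : (k:ℝ) ^ m ≠ 0 := (Real.rpow_pos_of_pos hk0 m).ne'
  rw [Real.GammaSeq, Aseq, Finset.prod_range_succ]
  rw [Real.rpow_sub hk0, Real.rpow_one]
  field_simp
  ring

end Analysis
section Analysis2
open Filter Real Topology

lemma f_pointwise {m : ℝ} (hm : ∀ k : ℕ, m ≠ -(k : ℝ)) (d : ℝ) (j : ℕ) :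
    Tendsto (fun n : ℕ => if j ≤ n then d^j / j.factorial * Aseq m (n-j) * (n:ℝ)^(1-m) else 0)
      atTop (𝓝 (d^j / j.factorial * (1 / Real.Gamma m))) := by
  have hA : Tendsto (fun n : ℕ => Aseq m (n-j) * ((n-j:ℕ):ℝ)^(1-m)) atTop
      (𝓝 (1/Real.Gamma m)) := (Aseq_tendsto hm).comp (Filter.tendsto_sub_atTop_nat j)
  have hr0 : Tendsto (fun n : ℕ => 1 + (j:ℝ)/((n-j:ℕ):ℝ)) atTop (𝓝 1) := by
    have h1 := (tendsto_const_div_atTop_nhds_zero_nat (j:ℝ)).comp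
      (Filter.tendsto_sub_atTop_nat j)
    have h2 := (tendsto_const_nhds : Filter.Tendsto (fun _ : ℕ => (1:ℝ)) atTop (𝓝 1)).add h1
    simpa using h2
  have hrpow : Tendsto (fun n : ℕ => (1 + (j:ℝ)/((n-j:ℕ):ℝ)) ^ (1-m)) atTop (𝓝 1) := by
    have hc : ContinuousAt (fun x : ℝ => x ^ (1-m)) 1 :=
      Real.continuousAt_rpow_const 1 (1-m) (Or.inl one_ne_zero)
    have h3 := hc.tendsto.comp hr0
    simpa [Real.one_rpow, Function.comp_def] using h3
  have hprod : Tendsto (fun n : ℕ => d^j / j.factorial *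
      ((Aseq m (n-j) * ((n-j:ℕ):ℝ)^(1-m)) * ((1 + (j:ℝ)/((n-j:ℕ):ℝ)) ^ (1-m))))
      atTop (𝓝 (d^j / j.factorial * ((1/Real.Gamma m) * 1))) :=
    tendsto_const_nhds.mul (hA.mul hrpow)
  rw [mul_one] at hprod
  refine Tendsto.congr' ?_ hprod
  filter_upwards [eventually_ge_atTop (j+1)] with n hn
  have hj : j ≤ n := by omega
  rw [if_pos hj]
  have hk1 : 1 ≤ n - j := by omega
  have hk0 : (0:ℝ) < ((n-j:ℕ):ℝ) := by exact_mod_cast Nat.lt_of_lt_of_le Nat.zero_lt_one hk1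
  have hcast : (n:ℝ) = ((n-j:ℕ):ℝ) + (j:ℝ) := by
    rw [← Nat.cast_add]
    congr 1
    omega
  have hsplit : (n:ℝ)^(1-m) = ((n-j:ℕ):ℝ)^(1-m) * ((1 + (j:ℝ)/((n-j:ℕ):ℝ)) ^ (1-m)) := by
    rw [← Real.mul_rpow (le_of_lt hk0) (by positivity)]
    congr 1
    rw [mul_add, mul_one, mul_comm ((n-j:ℕ):ℝ) ((j:ℝ)/((n-j:ℕ):ℝ)), div_mul_cancel₀ _ hk0.ne']
    exact hcast
  rw [hsplit]
  ring
end Analysis2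
section Analysis3
open Filter Real Topology

lemma rpow_split_bound {m : ℝ} {j n : ℕ} (hn : 1 ≤ n) (hj : j ≤ n) :
    (n:ℝ) ^ (1-m) ≤ ((j:ℝ)+1) ^ (max (1-m) 0) * (max ((n-j:ℕ):ℝ) 1) ^ (1-m) := by
  set t := max (1-m) 0 with ht
  have hj0 : (0:ℝ) ≤ (j:ℝ) := Nat.cast_nonneg j
  have hj1 : (1:ℝ) ≤ (j:ℝ) + 1 := by linarith
  have htn : (0:ℝ) ≤ t := le_max_right _ _
  by_cases hjn : j = n
  · subst hjn
    have h0 : ((j - j : ℕ):ℝ) = 0 := by simp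
    rw [h0]
    have hmax : max (0:ℝ) 1 = 1 := by norm_num
    rw [hmax, Real.one_rpow, mul_one]
    calc (j:ℝ) ^ (1-m) ≤ (j:ℝ) ^ t := by
          apply Real.rpow_le_rpow_of_exponent_le (by exact_mod_cast hn) (le_max_left _ _)
      _ ≤ ((j:ℝ)+1) ^ t := Real.rpow_le_rpow (by positivity) (by linarith) htn
  · have hjn' : j < n := lt_of_le_of_ne hj hjn
    have hk1 : 1 ≤ n - j := by omega
    have hk1' : (1:ℝ) ≤ ((n-j:ℕ):ℝ) := by exact_mod_cast hk1
    have hmax : max ((n-j:ℕ):ℝ) 1 = ((n-j:ℕ):ℝ) := max_eq_left hk1'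
    rw [hmax]
    have hnle : (n:ℝ) ≤ ((j:ℝ)+1) * ((n-j:ℕ):ℝ) := by
      have : n ≤ (j+1) * (n-j) := by nlinarith [Nat.sub_add_cancel hj]
      calc (n:ℝ) ≤ (((j+1) * (n-j) : ℕ) : ℝ) := by exact_mod_cast this
        _ = ((j:ℝ)+1) * ((n-j:ℕ):ℝ) := by push_cast; ring
    by_cases hsgn : 0 ≤ 1 - m
    · calc (n:ℝ) ^ (1-m) ≤ (((j:ℝ)+1) * ((n-j:ℕ):ℝ)) ^ (1-m) :=
            Real.rpow_le_rpow (by positivity) hnle hsgn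
        _ = ((j:ℝ)+1)^(1-m) * ((n-j:ℕ):ℝ)^(1-m) := Real.mul_rpow (by positivity) (by positivity)
        _ ≤ ((j:ℝ)+1)^t * ((n-j:ℕ):ℝ)^(1-m) := by
            have := Real.rpow_le_rpow_of_exponent_le hj1 (le_max_left (1-m) 0)
            exact mul_le_mul_of_nonneg_right this (Real.rpow_nonneg (by positivity) _)
    · push_neg at hsgn
      have hmono : (n:ℝ)^(1-m) ≤ ((n-j:ℕ):ℝ)^(1-m) := by
        have hle : ((n-j:ℕ):ℝ) ≤ (n:ℝ) := by exact_mod_cast Nat.sub_le n j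
        have hp1 : (0:ℝ) < ((n-j:ℕ):ℝ) := by linarith
        have h1 : ((n-j:ℕ):ℝ)^(m-1) ≤ (n:ℝ)^(m-1) :=
          Real.rpow_le_rpow (le_of_lt hp1) hle (by linarith)
        have e1 : (n:ℝ)^(1-m) = ((n:ℝ)^(m-1))⁻¹ := by
          rw [show (1-m) = -(m-1) by ring, Real.rpow_neg (by positivity)]
        have e2 : ((n-j:ℕ):ℝ)^(1-m) = (((n-j:ℕ):ℝ)^(m-1))⁻¹ := by
          rw [show (1-m) = -(m-1) by ring, Real.rpow_neg (le_of_lt hp1)]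
        rw [e1, e2]
        exact inv_anti₀ (Real.rpow_pos_of_pos hp1 _) h1
      have hone : (1:ℝ) ≤ ((j:ℝ)+1)^t :=  by
        calc (1:ℝ) = ((j:ℝ)+1)^(0:ℝ) := (Real.rpow_zero _).symm
          _ ≤ ((j:ℝ)+1)^t := Real.rpow_le_rpow_of_exponent_le hj1 htn
      calc (n:ℝ)^(1-m) ≤ ((n-j:ℕ):ℝ)^(1-m) := hmono
        _ ≤ ((j:ℝ)+1)^t * ((n-j:ℕ):ℝ)^(1-m) := by
            nlinarith [Real.rpow_nonneg (le_of_lt (show (0:ℝ) < ((n-j:ℕ):ℝ) by linarith)) (1-m)]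

lemma summable_bound (r : ℝ) (hr : 0 ≤ r) (N : ℕ) (C : ℝ) :
    Summable (fun j : ℕ => (r+1)^j / (j.factorial : ℝ) * (((j:ℝ)+1)^N * C)) := by
  have hbase : Summable (fun j : ℕ => (r+1)^j / (j.factorial : ℝ) * ((j:ℝ)+1)^N) := by
    apply summable_of_ratio_test_tendsto_lt_one (l := 0) zero_lt_one
    · filter_upwards [] with j
      positivity
    · have h1 : Tendsto (fun j : ℕ => (r+1) / ((j:ℝ)+1)) atTop (𝓝 0) := by
        have := tendsto_const_div_atTop_nhds_zero_nat (r+1)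
        have h2 := this.comp (Filter.tendsto_add_atTop_nat 1)
        refine Tendsto.congr' ?_ h2
        filter_upwards [] with j
        simp only [Function.comp_apply]
        push_cast
        ring
      have h2 : Tendsto (fun j : ℕ => (((j:ℝ)+2)/((j:ℝ)+1))^N) atTop (𝓝 1) := by
        have h3 : Tendsto (fun j : ℕ => ((j:ℝ)+2)/((j:ℝ)+1)) atTop (𝓝 1) := by
          have h4 := (tendsto_const_div_atTop_nhds_zero_nat (1:ℝ)).comp
            (Filter.tendsto_add_atTop_nat 1)
          have h5 := (tendsto_const_nhds : Filter.Tendsto (fun _ : ℕ => (1:ℝ)) atTop (𝓝 1)).add h4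
          rw [add_zero] at h5
          refine Tendsto.congr' ?_ h5
          filter_upwards [] with j
          have hj1 : ((j:ℝ)+1) ≠ 0 := by positivity
          simp only [Function.comp_apply]
          push_cast
          field_simp
          ring
        have := h3.pow N
        simpa using this
      have hmul := h1.mul h2
      rw [zero_mul] at hmul
      refine Tendsto.congr' ?_ hmul
      filter_upwards [] with j
      have hj1 : ((j:ℝ)+1) ≠ 0 := by positivity
      have hjn1 : ((j:ℝ)+1)^N ≠ 0 := by positivity
      have hf : (j.factorial : ℝ) ≠ 0 := Nat.cast_ne_zero.2 j.factorial_ne_zero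
      rw [Real.norm_of_nonneg (by positivity), Real.norm_of_nonneg (by positivity)]
      rw [Nat.factorial_succ, pow_succ]
      push_cast
      rw [div_pow]
      field_simp
      ring
  simpa [mul_assoc] using hbase.mul_right C
end Analysis3
section Final
open Filter Real Topology


/-- `Ψ_n(a,b,m) ~ (n!)² bⁿ e^{a/b − m} n^{m−1} / Γ(m)` as `n → ∞`,
for `b > 0` and `m` not a nonpositive integer. -/
theorem Psi_asymptotics (a : ℝ) (b : ℝ) (hb : 0 < b) (m : ℝ)
    (hm : ∀ k : ℕ, m ≠ -(k : ℝ)) :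
    Filter.Tendsto
      (fun n : ℕ =>
        Psi a b m n / (((n.factorial : ℝ)) ^ 2 * b ^ n * (n : ℝ) ^ (m - 1)))
      Filter.atTop (nhds (Real.exp (a / b - m) / Real.Gamma m)) := by
  have hb' : b ≠ 0 := hb.ne'
  set d := (a - m * b) / b with hd
  set t := max (1 - m) 0 with ht
  set N := ⌈t⌉₊ with hN
  -- the dominating constant
  have habs : Tendsto (fun k : ℕ => |Aseq m k * (k:ℝ) ^ (1-m)|) atTop
      (𝓝 |1 / Real.Gamma m|) := (Aseq_tendsto hm).abs
  obtain ⟨C, hC⟩ := habs.bddAbove_range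
  have hCk : ∀ k : ℕ, 1 ≤ k → |Aseq m k| * (k:ℝ) ^ (1-m) ≤ C := by
    intro k hk
    have h1 : |Aseq m k * (k:ℝ) ^ (1-m)| ≤ C := hC (Set.mem_range_self k)
    rwa [abs_mul, abs_of_nonneg (Real.rpow_nonneg (Nat.cast_nonneg k) _)] at h1
  set C' := max C 1 with hC'
  -- the three Tannery ingredients
  set f : ℕ → ℕ → ℝ := fun n j =>
    if j ≤ n then d ^ j / j.factorial * Aseq m (n - j) * (n:ℝ) ^ (1-m) else 0 with hf
  have hAC' : ∀ n j : ℕ, j ≤ n →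
      |Aseq m (n - j)| * (max ((n-j:ℕ):ℝ) 1) ^ (1-m) ≤ C' := by
    intro n j hj
    by_cases hjn : j = n
    · have h0 : n - j = 0 := by omega
      rw [h0]
      have : |Aseq m 0| = 1 := by simp [Aseq]
      rw [this]
      norm_num
      exact le_max_right C 1
    · have hk1 : 1 ≤ n - j := by omega
      have hk1' : (1:ℝ) ≤ ((n-j:ℕ):ℝ) := by exact_mod_cast hk1
      rw [max_eq_left hk1']
      exact le_trans (hCk _ hk1) (le_max_left C 1)
  have hbd : ∀ᶠ n in atTop, ∀ j : ℕ,
      ‖f n j‖ ≤ (|d| + 1) ^ j / (j.factorial : ℝ) * (((j:ℝ)+1) ^ N * C') := by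
    filter_upwards [eventually_ge_atTop 1] with n hn j
    have hC'0 : (0:ℝ) < C' := lt_of_lt_of_le one_pos (le_max_right C 1)
    by_cases hj : j ≤ n
    · rw [hf]
      simp only [if_pos hj]
      have hfab : ‖d ^ j / (j.factorial:ℝ) * Aseq m (n - j) * (n:ℝ) ^ (1-m)‖
          = |d| ^ j / (j.factorial:ℝ) * (|Aseq m (n - j)| * (n:ℝ) ^ (1-m)) := by
        rw [Real.norm_eq_abs, abs_mul, abs_mul, abs_div, abs_pow, Nat.abs_cast,
          abs_of_nonneg (Real.rpow_nonneg (Nat.cast_nonneg n) _)]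
        ring
      rw [hfab]
      have step1 : |Aseq m (n - j)| * (n:ℝ) ^ (1-m)
          ≤ ((j:ℝ)+1) ^ t * (|Aseq m (n - j)| * (max ((n-j:ℕ):ℝ) 1) ^ (1-m)) := by
        have h2 := rpow_split_bound (m := m) hn hj
        have h3 := mul_le_mul_of_nonneg_left h2 (abs_nonneg (Aseq m (n - j)))
        calc |Aseq m (n - j)| * (n:ℝ) ^ (1-m)
            ≤ |Aseq m (n - j)| * (((j:ℝ)+1) ^ (max (1-m) 0) * (max ((n-j:ℕ):ℝ) 1) ^ (1-m)) := h3
          _ = ((j:ℝ)+1) ^ t * (|Aseq m (n - j)| * (max ((n-j:ℕ):ℝ) 1) ^ (1-m)) := by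
              rw [← ht]; ring
      have step2 : ((j:ℝ)+1) ^ t ≤ ((j:ℝ)+1) ^ N := by
        have hj1 : (1:ℝ) ≤ (j:ℝ) + 1 := by
          have : (0:ℝ) ≤ (j:ℝ) := Nat.cast_nonneg j
          linarith
        calc ((j:ℝ)+1) ^ t ≤ ((j:ℝ)+1) ^ ((N:ℕ):ℝ) :=
              Real.rpow_le_rpow_of_exponent_le hj1 (Nat.le_ceil t)
          _ = ((j:ℝ)+1) ^ N := Real.rpow_natCast _ N
      have htpos : (0:ℝ) ≤ ((j:ℝ)+1) ^ t := Real.rpow_nonneg (by positivity) t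
      have step3 : |Aseq m (n - j)| * (n:ℝ) ^ (1-m) ≤ ((j:ℝ)+1) ^ N * C' := by
        calc |Aseq m (n - j)| * (n:ℝ) ^ (1-m)
            ≤ ((j:ℝ)+1) ^ t * (|Aseq m (n - j)| * (max ((n-j:ℕ):ℝ) 1) ^ (1-m)) := step1
          _ ≤ ((j:ℝ)+1) ^ t * C' := by
              exact mul_le_mul_of_nonneg_left (hAC' n j hj) htpos
          _ ≤ ((j:ℝ)+1) ^ N * C' := by
              exact mul_le_mul_of_nonneg_right step2 (le_of_lt hC'0)
      calc |d| ^ j / (j.factorial:ℝ) * (|Aseq m (n - j)| * (n:ℝ) ^ (1-m))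
          ≤ |d| ^ j / (j.factorial:ℝ) * (((j:ℝ)+1) ^ N * C') := by
            exact mul_le_mul_of_nonneg_left step3 (by positivity)
        _ ≤ (|d| + 1) ^ j / (j.factorial : ℝ) * (((j:ℝ)+1) ^ N * C') := by
            have h4 : |d| ^ j ≤ (|d| + 1) ^ j :=
              pow_le_pow_left₀ (abs_nonneg d) (by linarith) j
            have h5 : (0:ℝ) < (j.factorial : ℝ) := by positivity
            have h6 : (0:ℝ) ≤ ((j:ℝ)+1) ^ N * C' := by positivity
            exact mul_le_mul_of_nonneg_right (by gcongr) h6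
    · rw [hf]
      simp only [if_neg hj, norm_zero]
      positivity
  have hTan := tendsto_tsum_of_dominated_convergence
    (summable_bound |d| (abs_nonneg d) N C') (f_pointwise hm d) hbd
  have hgsum : ∑' j : ℕ, (d ^ j / (j.factorial:ℝ) * (1 / Real.Gamma m))
      = Real.exp d / Real.Gamma m := by
    rw [tsum_mul_right]
    have hexp : Real.exp d = ∑' j : ℕ, d ^ j / (j.factorial:ℝ) := by
      rw [Real.exp_eq_exp_ℝ, NormedSpace.exp_eq_tsum_div]
    rw [← hexp, mul_one_div]
  have hd2 : d = a / b - m := by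
    rw [hd, sub_div, mul_div_assoc, div_self hb', mul_one]
  rw [hgsum] at hTan
  rw [← hd2]
  refine Tendsto.congr' ?_ hTan
  filter_upwards [eventually_ge_atTop 1] with n hn
  have hn0 : (0:ℝ) < (n:ℝ) := by exact_mod_cast hn
  have hfac : ((n.factorial : ℕ):ℝ) ≠ 0 := Nat.cast_ne_zero.2 n.factorial_ne_zero
  have hbn : b ^ n ≠ 0 := pow_ne_zero n hb'
  have hrp : (0:ℝ) < (n:ℝ) ^ (m-1) := Real.rpow_pos_of_pos hn0 _
  have hsum0 : ∑' j : ℕ, f n j = ∑ j ∈ Finset.range (n+1), f n j := by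
    refine tsum_eq_sum (fun j hj => ?_)
    rw [hf]
    have : ¬ j ≤ n := by
      intro hcon
      exact hj (Finset.mem_range.2 (by omega))
    simp only [if_neg this]
  rw [hsum0, Psi_eq_Useq, Useq]
  have hXX : ∀ S : ℝ, ((n.factorial:ℝ) * ((n.factorial:ℝ) * S))
      / ((n.factorial:ℝ)^2 * b^n * (n:ℝ)^(m-1)) = S / (b^n * (n:ℝ)^(m-1)) := by
    intro S
    rw [pow_two]
    field_simp
  rw [hXX, Finset.sum_div]
  refine (Finset.sum_congr rfl (fun j hj => ?_))
  have hj' : j ≤ n := by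
    have := Finset.mem_range.1 hj
    omega
  rw [hf]
  simp only [if_pos hj']
  rw [Bseq, pow_sub₀ b hb' hj', hd, div_pow,
    show (1-m) = -(m-1) by ring, Real.rpow_neg (le_of_lt hn0)]
  have hfj : ((j.factorial : ℕ):ℝ) ≠ 0 := Nat.cast_ne_zero.2 j.factorial_ne_zero
  have hbj : b ^ j ≠ 0 := pow_ne_zero j hb'
  field_simp
end Final
end

section
/- For n ≥ 1 define T_n := ∑_{k=0}^{n} (binom(n,k))² · Ψ_k(0, 1, 1/2) · (Ψ_{n−k}(1, 1, 1/2))². Then T_n = (Ψ_n(1, 1, 1/2))² · (1 + O(n^{−4})); that is, there exists a constant K such that for all n ≥ 1, | T_n / (Ψ_n(1,1,1/2))² − 1 | ≤ K·n^{−4}. -/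
open scoped BigOperators

/-- `T_n`, the squared degree-2 Bethe partition sum of `N_DE(J_n)`. -/
noncomputable def T (n : ℕ) : ℝ :=
  ∑ k ∈ Finset.range (n + 1),
    ((n.choose k : ℝ)) ^ 2 * Psi 0 1 (1 / 2) k * (Psi 1 1 (1 / 2) (n - k)) ^ 2

section Auxiliary

open Equiv Equiv.Perm Finset

noncomputable def W (n : ℕ) : ℝ :=
  ∑ σ : Equiv.Perm (Fin n), (2 : ℝ)⁻¹ ^ (Multiset.card σ.cycleType)

noncomputable def D (n : ℕ) : ℝ :=
  ∑ σ : Equiv.Perm (Fin n),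
    (0 : ℝ) ^ fixedPointCount σ * (2 : ℝ)⁻¹ ^ (Multiset.card σ.cycleType)


-- removal lemma
lemma card_cycleType_le_swap_mul {α : Type*} [DecidableEq α] [Fintype α]
    (τ : Equiv.Perm α) (x : α) (hx : τ x ≠ x) :
    Multiset.card τ.cycleType ≤ Multiset.card ((Equiv.swap x (τ x)) * τ).cycleType + 1 := by
  classical
  set c := τ.cycleOf x with hc
  have hmem : c ∈ τ.cycleFactorsFinset :=
    Equiv.Perm.cycleOf_mem_cycleFactorsFinset_iff.mpr (Equiv.Perm.mem_support.mpr hx)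
  have hdisj : Equiv.Perm.Disjoint (τ * c⁻¹) c :=
    Equiv.Perm.disjoint_mul_inv_of_mem_cycleFactorsFinset hmem
  have hcyc : c.IsCycle := Equiv.Perm.isCycle_cycleOf τ hx
  have hcx : c x = τ x := Equiv.Perm.cycleOf_apply_self τ x
  have hcτx : c (τ x) = τ (τ x) := Equiv.Perm.cycleOf_apply_apply_self τ x
  set θ := τ * c⁻¹ with hθ
  have hτθ : τ = θ * c := by simp [hθ]
  have hcard : Multiset.card τ.cycleType = Multiset.card θ.cycleType + 1 := by
    conv_lhs => rw [hτθ]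
    rw [Equiv.Perm.Disjoint.cycleType_mul hdisj, hcyc.cycleType]
    simp
  have hdisj2 : Equiv.Perm.Disjoint (Equiv.swap x (τ x) * c) θ := by
    intro y
    rcases hdisj y with h1 | h2
    · exact Or.inr h1
    · left
      have hyx : y ≠ x := by
        rintro rfl
        exact hx (hcx.symm.trans h2)
      have hyτx : y ≠ τ x := by
        rintro rfl
        exact hx (τ.injective (hcτx.symm.trans h2))
      rw [Equiv.Perm.mul_apply, h2, Equiv.swap_apply_of_ne_of_ne hyx hyτx]
  have hmul : Equiv.swap x (τ x) * τ = (Equiv.swap x (τ x) * c) * θ := by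
    rw [mul_assoc, ← hdisj.commute.eq, ← hτθ]
  have h2 : Multiset.card ((Equiv.swap x (τ x)) * τ).cycleType
      = Multiset.card (Equiv.swap x (τ x) * c).cycleType + Multiset.card θ.cycleType := by
    rw [hmul, Equiv.Perm.Disjoint.cycleType_mul hdisj2, Multiset.card_add]
  omega




def finNeZeroEquiv (n : ℕ) : Fin n ≃ {i : Fin (n + 1) // i ≠ 0} where
  toFun x := ⟨x.succ, Fin.succ_ne_zero x⟩
  invFun i := (i : Fin (n + 1)).pred i.2
  left_inv x := by simp
  right_inv i := by cases i; simp

lemma cycleType_decomposeFin_zero {n : ℕ} (e : Equiv.Perm (Fin n)) :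
    (Equiv.Perm.decomposeFin.symm (0, e)).cycleType = e.cycleType := by
  have hE : Equiv.Perm.decomposeFin.symm (0, e) = e.extendDomain (finNeZeroEquiv n) := by
    ext i
    refine Fin.cases ?_ (fun x => ?_) i
    · rw [Equiv.Perm.decomposeFin_symm_apply_zero,
        Equiv.Perm.extendDomain_apply_not_subtype _ _ (by simp)]
    · rw [Equiv.Perm.decomposeFin_symm_apply_succ]
      have h1 : (x.succ : Fin (n + 1)) = ((finNeZeroEquiv n) x : Fin (n + 1)) := rfl
      rw [h1, Equiv.Perm.extendDomain_apply_image]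
      simp [finNeZeroEquiv]
  rw [hE, Equiv.Perm.cycleType_extendDomain]

lemma card_cycleType_decomposeFin {n : ℕ} (p : Fin (n + 1)) (e : Equiv.Perm (Fin n)) :
    Multiset.card (Equiv.Perm.decomposeFin.symm (p, e)).cycleType
      ≤ Multiset.card e.cycleType + 1 := by
  by_cases hp : p = 0
  · subst hp
    rw [cycleType_decomposeFin_zero]
    exact Nat.le_succ _
  · set τ := Equiv.Perm.decomposeFin.symm (p, e) with hτdef
    have hτ0 : τ 0 = p := Equiv.Perm.decomposeFin_symm_apply_zero p e
    have h0 : τ 0 ≠ 0 := by rw [hτ0]; exact hp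
    have key := card_cycleType_le_swap_mul τ 0 h0
    have hswap : Equiv.swap 0 (τ 0) * τ = Equiv.Perm.decomposeFin.symm (0, e) := by
      have hτ : τ = Equiv.swap 0 p * Equiv.Perm.decomposeFin.symm (0, e) := by
        ext i
        refine Fin.cases ?_ (fun x => ?_) i
        · simp [hτdef, Equiv.Perm.decomposeFin_symm_apply_zero]
        · simp [hτdef, Equiv.Perm.decomposeFin_symm_apply_succ]
      rw [hτ0, hτ, ← mul_assoc, Equiv.swap_mul_self, one_mul]
    rw [hswap, cycleType_decomposeFin_zero] at key
    omega





lemma one_le_W (n : ℕ) : 1 ≤ W n := by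
  have h := Finset.single_le_sum
    (f := fun σ : Equiv.Perm (Fin n) => (2 : ℝ)⁻¹ ^ (Multiset.card σ.cycleType))
    (fun i _ => by positivity) (Finset.mem_univ 1)
  simpa [W] using h

lemma W_pos (n : ℕ) : 0 < W n := lt_of_lt_of_le one_pos (one_le_W n)

lemma W_step (n : ℕ) : (n + 1 : ℝ) * W n ≤ 2 * W (n + 1) := by
  have h1 : W (n + 1) = ∑ pe : Fin (n + 1) × Equiv.Perm (Fin n),
      (2 : ℝ)⁻¹ ^ (Multiset.card (Equiv.Perm.decomposeFin.symm pe).cycleType) :=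
    (Equiv.sum_comp Equiv.Perm.decomposeFin.symm _).symm
  have key : ∀ p : Fin (n + 1), W n ≤ ∑ e : Equiv.Perm (Fin n),
      2 * (2 : ℝ)⁻¹ ^ (Multiset.card (Equiv.Perm.decomposeFin.symm (p, e)).cycleType) := by
    intro p
    refine Finset.sum_le_sum fun e _ => ?_
    have hle := card_cycleType_decomposeFin p e
    have h2 : ((2 : ℝ)⁻¹) ^ (Multiset.card e.cycleType + 1)
        ≤ (2 : ℝ)⁻¹ ^ (Multiset.card (Equiv.Perm.decomposeFin.symm (p, e)).cycleType) :=
      pow_le_pow_of_le_one (by norm_num) (by norm_num) hle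
    calc (2 : ℝ)⁻¹ ^ (Multiset.card e.cycleType)
        = 2 * (2 : ℝ)⁻¹ ^ (Multiset.card e.cycleType + 1) := by
          rw [pow_succ]; ring
      _ ≤ 2 * (2 : ℝ)⁻¹ ^ (Multiset.card (Equiv.Perm.decomposeFin.symm (p, e)).cycleType) := by
          linarith
  calc (n + 1 : ℝ) * W n = ∑ _p : Fin (n + 1), W n := by
        rw [Finset.sum_const, Finset.card_univ, Fintype.card_fin, nsmul_eq_mul]
        push_cast; ring
    _ ≤ ∑ p : Fin (n + 1), ∑ e : Equiv.Perm (Fin n),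
        2 * (2 : ℝ)⁻¹ ^ (Multiset.card (Equiv.Perm.decomposeFin.symm (p, e)).cycleType) :=
      Finset.sum_le_sum fun p _ => key p
    _ = 2 * W (n + 1) := by
      rw [h1, Fintype.sum_prod_type, Finset.mul_sum]
      exact Finset.sum_congr rfl fun p _ => by rw [Finset.mul_sum]

lemma W_iter (m k : ℕ) : ((m + k).descFactorial k : ℝ) * W m ≤ 2 ^ k * W (m + k) := by
  induction k with
  | zero => simp
  | succ k ih =>
    have h1 : (((m + (k + 1)).descFactorial (k + 1) : ℕ) : ℝ)
        = (m + k + 1 : ℝ) * ((m + k).descFactorial k : ℝ) := by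
      rw [show m + (k + 1) = (m + k) + 1 from rfl, Nat.succ_descFactorial_succ]
      push_cast; ring
    have hnn : (0 : ℝ) ≤ (m + k + 1 : ℝ) := by positivity
    calc (((m + (k + 1)).descFactorial (k + 1) : ℕ) : ℝ) * W m
        = (m + k + 1 : ℝ) * (((m + k).descFactorial k : ℝ) * W m) := by rw [h1]; ring
      _ ≤ (m + k + 1 : ℝ) * (2 ^ k * W (m + k)) := by
          exact mul_le_mul_of_nonneg_left ih hnn
      _ = 2 ^ k * ((m + k + 1 : ℝ) * W (m + k)) := by ring
      _ ≤ 2 ^ k * (2 * W (m + k + 1)) := by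
          have := W_step (m + k)
          have h2 : (0:ℝ) ≤ 2 ^ k := by positivity
          have h3 : ((m + k : ℕ) + 1 : ℝ) = (m + k + 1 : ℝ) := by push_cast; ring
          rw [h3] at this
          exact mul_le_mul_of_nonneg_left this h2
      _ = 2 ^ (k + 1) * W (m + (k + 1)) := by
          rw [show m + (k + 1) = (m + k) + 1 from rfl]; ring







lemma sum_count_cycleType (n : ℕ) (σ : Equiv.Perm (Fin n)) :
    ∑ ℓ ∈ Finset.Icc 2 n, σ.cycleType.count ℓ = Multiset.card σ.cycleType := by
  rw [← Multiset.toFinset_sum_count_eq σ.cycleType]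
  refine (Finset.sum_subset ?_ ?_).symm
  · intro ℓ hℓ
    rw [Multiset.mem_toFinset] at hℓ
    rw [Finset.mem_Icc]
    refine ⟨Equiv.Perm.two_le_of_mem_cycleType hℓ, ?_⟩
    calc ℓ ≤ σ.cycleType.sum :=
          Multiset.single_le_sum (fun x _ => Nat.zero_le x) _ hℓ
      _ = σ.support.card := σ.sum_cycleType
      _ ≤ Fintype.card (Fin n) := Finset.card_le_univ _
      _ = n := Fintype.card_fin n
  · intro ℓ _ hℓ
    rw [Multiset.count_eq_zero_of_notMem (by simpa using hℓ)]

lemma prod_weight (n : ℕ) (b : ℝ) (σ : Equiv.Perm (Fin n)) :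
    ∏ ℓ ∈ Finset.Icc 2 n, ((1/2 : ℝ) * 1 ^ ℓ) ^ (σ.cycleType.count ℓ)
      = (2 : ℝ)⁻¹ ^ (Multiset.card σ.cycleType) := by
  rw [← sum_count_cycleType n σ, ← Finset.prod_pow_eq_pow_sum]
  exact Finset.prod_congr rfl fun ℓ _ => by norm_num

lemma Psi_one_eq (n : ℕ) : Psi 1 1 (1/2) n = (n.factorial : ℝ) * W n := by
  unfold Psi W
  congr 1
  refine Finset.sum_congr rfl fun σ _ => ?_
  rw [one_pow, one_mul, ← prod_weight n 1 σ]

lemma Psi_zero_eq (n : ℕ) : Psi 0 1 (1/2) n = (n.factorial : ℝ) * D n := by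
  unfold Psi D
  congr 1
  refine Finset.sum_congr rfl fun σ _ => ?_
  rw [← prod_weight n 1 σ]

lemma D_nonneg (n : ℕ) : 0 ≤ D n :=
  Finset.sum_nonneg fun σ _ => by positivity

lemma D_le (n : ℕ) : D n ≤ (n.factorial : ℝ) := by
  calc D n ≤ ∑ _σ : Equiv.Perm (Fin n), (1 : ℝ) := by
        refine Finset.sum_le_sum fun σ _ => ?_
        have h1 : (0 : ℝ) ^ fixedPointCount σ ≤ 1 := by
          rcases Nat.eq_zero_or_pos (fixedPointCount σ) with h | h
          · simp [h]
          · rw [zero_pow (Nat.pos_iff_ne_zero.mp h)]; norm_num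
        have h2 : (2 : ℝ)⁻¹ ^ (Multiset.card σ.cycleType) ≤ 1 :=
          pow_le_one₀ (by norm_num) (by norm_num)
        have h3 : (0:ℝ) ≤ (0 : ℝ) ^ fixedPointCount σ := by positivity
        exact mul_le_one₀ h1 (by positivity) h2
    _ = (n.factorial : ℝ) := by
        rw [Finset.sum_const, Finset.card_univ, Fintype.card_perm, Fintype.card_fin,
          nsmul_eq_mul, mul_one]

lemma Psi_zero_zero : Psi 0 1 (1/2) 0 = 1 := by
  rw [Psi_zero_eq]
  have : D 0 = 1 := by
    unfold D
    rw [Fintype.sum_eq_single (1 : Equiv.Perm (Fin 0)) (fun σ h => absurd (Subsingleton.elim σ 1) h)]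
    simp [fixedPointCount]
  rw [this]; simp

lemma Psi_zero_one : Psi 0 1 (1/2) 1 = 0 := by
  rw [Psi_zero_eq]
  have : D 1 = 0 := by
    unfold D
    rw [Fintype.sum_eq_single (1 : Equiv.Perm (Fin 1)) (fun σ h => absurd (Subsingleton.elim σ 1) h)]
    have : fixedPointCount (1 : Equiv.Perm (Fin 1)) = 1 := by
      unfold fixedPointCount
      simp
    rw [this]
    simp
  rw [this]; simp



-- Sum bound
lemma sum_bound (n : ℕ) :
    ∑ k ∈ Finset.Icc 2 n, (4 : ℝ) ^ k / (((k - 2).factorial : ℝ)) ^ 2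
      ≤ 16 * Real.exp 4 := by
  rw [← Finset.Ico_add_one_right_eq_Icc, Finset.sum_Ico_eq_sum_range]
  have h1 : ∀ j ∈ Finset.range (n + 1 - 2),
      (4 : ℝ) ^ (2 + j) / (((2 + j - 2).factorial : ℝ)) ^ 2
        ≤ 16 * ((4 : ℝ) ^ j / (j.factorial : ℝ)) := by
    intro j _
    have h2 : 2 + j - 2 = j := by omega
    rw [h2, pow_add]
    have hf1 : (1 : ℝ) ≤ (j.factorial : ℝ) := by exact_mod_cast j.factorial_pos
    have hle : (j.factorial : ℝ) ≤ ((j.factorial : ℝ)) ^ 2 := by nlinarith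
    have := div_le_div_of_nonneg_left (by positivity : (0:ℝ) ≤ (4:ℝ)^j)
      (by positivity : (0:ℝ) < (j.factorial : ℝ)) hle
    calc (4 : ℝ) ^ 2 * 4 ^ j / ((j.factorial : ℝ)) ^ 2
        = 16 * ((4 : ℝ) ^ j / ((j.factorial : ℝ)) ^ 2) := by ring
      _ ≤ 16 * ((4 : ℝ) ^ j / (j.factorial : ℝ)) := by nlinarith [this]
  calc ∑ j ∈ Finset.range (n + 1 - 2),
        (4 : ℝ) ^ (2 + j) / (((2 + j - 2).factorial : ℝ)) ^ 2
      ≤ ∑ j ∈ Finset.range (n + 1 - 2), 16 * ((4 : ℝ) ^ j / (j.factorial : ℝ)) :=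
        Finset.sum_le_sum h1
    _ = 16 * ∑ j ∈ Finset.range (n + 1 - 2), ((4 : ℝ) ^ j / (j.factorial : ℝ)) := by
        rw [Finset.mul_sum]
    _ ≤ 16 * Real.exp 4 := by
        have := Real.sum_le_exp_of_nonneg (by norm_num : (0:ℝ) ≤ 4) (n + 1 - 2)
        nlinarith [this]

-- descFactorial lower bound
lemma descFactorial_lb {n k : ℕ} (h2 : 2 ≤ k) (hn : k ≤ n) :
    (k - 2).factorial * n.descFactorial 2 ≤ n.descFactorial k := by
  have h := Nat.descFactorial_mul_descFactorial (n := n) h2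
  have h3 : (k - 2).factorial = (k - 2).descFactorial (k - 2) :=
    (Nat.descFactorial_self _).symm
  rw [h3]
  calc (k - 2).descFactorial (k - 2) * n.descFactorial 2
      ≤ (n - 2).descFactorial (k - 2) * n.descFactorial 2 :=
        Nat.mul_le_mul_right _ (Nat.descFactorial_le _ (by omega))
    _ = n.descFactorial k := h

end Auxiliary

/-- `T_n = (Ψ_n(1,1,1/2))² (1 + O(n⁻⁴))`. -/







theorem T_eq_Psi_sq_up_to_n4 :
    ∃ K : ℝ, ∀ n : ℕ, 1 ≤ n →
      |T n / (Psi 1 1 (1 / 2) n) ^ 2 - 1| ≤ K * ((n : ℝ) ^ 4)⁻¹ := by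
  refine ⟨64 * Real.exp 4, fun n hn => ?_⟩
  have hexp : (0:ℝ) < Real.exp 4 := Real.exp_pos 4
  set P := Psi 1 1 (1 / 2) n with hP
  have hPpos : 0 < P := by
    rw [hP, Psi_one_eq]
    have := W_pos n
    have := n.factorial_pos
    positivity
  have hP2 : (0:ℝ) < P ^ 2 := by positivity
  -- nonnegativity of terms
  have hg_nonneg : ∀ k, 0 ≤ ((n.choose k : ℝ)) ^ 2 * Psi 0 1 (1 / 2) k
      * (Psi 1 1 (1 / 2) (n - k)) ^ 2 := by
    intro k
    have h0 : 0 ≤ Psi 0 1 (1/2) k := by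
      rw [Psi_zero_eq]
      have := D_nonneg k
      positivity
    positivity
  -- split the sum
  have hsplit : T n = P ^ 2 + ∑ k ∈ Finset.Icc 1 n,
      ((n.choose k : ℝ)) ^ 2 * Psi 0 1 (1 / 2) k * (Psi 1 1 (1 / 2) (n - k)) ^ 2 := by
    rw [T, show Finset.range (n + 1) = insert 0 (Finset.Icc 1 n) from
      Finset.ext fun x => by simp [Nat.lt_succ_iff]; omega]
    rw [Finset.sum_insert (by simp)]
    congr 1
    rw [Nat.choose_zero_right, Psi_zero_zero, Nat.sub_zero]
    push_cast; ring
  set S := ∑ k ∈ Finset.Icc 1 n,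
      ((n.choose k : ℝ)) ^ 2 * Psi 0 1 (1 / 2) k * (Psi 1 1 (1 / 2) (n - k)) ^ 2 with hS
  have hS_eq : S = ∑ k ∈ Finset.Icc 2 n,
      ((n.choose k : ℝ)) ^ 2 * Psi 0 1 (1 / 2) k * (Psi 1 1 (1 / 2) (n - k)) ^ 2 := by
    rw [hS, show Finset.Icc 1 n = insert 1 (Finset.Icc 2 n) from
      Finset.ext fun x => by simp [Finset.mem_Icc]; omega]
    rw [Finset.sum_insert (by simp)]
    rw [Psi_zero_one]
    ring
  have hS_nonneg : 0 ≤ S := by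
    rw [hS_eq]
    exact Finset.sum_nonneg fun k _ => hg_nonneg k
  -- per-term bound
  have hterm : ∀ k ∈ Finset.Icc 2 n,
      ((n.choose k : ℝ)) ^ 2 * Psi 0 1 (1 / 2) k * (Psi 1 1 (1 / 2) (n - k)) ^ 2
        ≤ P ^ 2 * (4 ^ k / ((n.descFactorial k : ℝ)) ^ 2) := by
    intro k hk
    rw [Finset.mem_Icc] at hk
    obtain ⟨hk2, hkn⟩ := hk
    have hdF : (0:ℝ) < (n.descFactorial k : ℝ) := by
      have : n.descFactorial k ≠ 0 := by
        rw [Ne, Nat.descFactorial_eq_zero_iff_lt]; omega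
      exact_mod_cast Nat.pos_of_ne_zero this
    have hWb : W (n - k) ≤ 2 ^ k * W n / (n.descFactorial k : ℝ) := by
      have h := W_iter (n - k) k
      rw [Nat.sub_add_cancel hkn] at h
      rw [le_div_iff₀ hdF]
      linarith [h]
    have hWnk : 0 ≤ W (n - k) := (W_pos _).le
    have hq : 0 ≤ 2 ^ k * W n / (n.descFactorial k : ℝ) := by
      have := (W_pos n).le
      positivity
    have hfact : ((n.choose k : ℝ)) * (k.factorial : ℝ) * ((n - k).factorial : ℝ)
        = (n.factorial : ℝ) := by
      exact_mod_cast congrArg (Nat.cast (R := ℝ)) (Nat.choose_mul_factorial_mul_factorial hkn)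
    rw [Psi_zero_eq, Psi_one_eq]
    have hc : (0:ℝ) ≤ (n.choose k : ℝ) := Nat.cast_nonneg _
    have hkf : (0:ℝ) ≤ (k.factorial : ℝ) := Nat.cast_nonneg _
    have hnkf : (0:ℝ) ≤ ((n - k).factorial : ℝ) := Nat.cast_nonneg _
    calc ((n.choose k : ℝ)) ^ 2 * ((k.factorial : ℝ) * D k)
          * (((n - k).factorial : ℝ) * W (n - k)) ^ 2
        ≤ ((n.choose k : ℝ)) ^ 2 * ((k.factorial : ℝ) * (k.factorial : ℝ))
          * (((n - k).factorial : ℝ) * (2 ^ k * W n / (n.descFactorial k : ℝ))) ^ 2 := by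
          have h1 : D k ≤ (k.factorial : ℝ) := D_le k
          have h2 : ((n - k).factorial : ℝ) * W (n - k)
              ≤ ((n - k).factorial : ℝ) * (2 ^ k * W n / (n.descFactorial k : ℝ)) :=
            mul_le_mul_of_nonneg_left hWb hnkf
          have h3 : (0:ℝ) ≤ ((n - k).factorial : ℝ) * W (n - k) := by positivity
          have h4 : (((n - k).factorial : ℝ) * W (n - k)) ^ 2
              ≤ (((n - k).factorial : ℝ) * (2 ^ k * W n / (n.descFactorial k : ℝ))) ^ 2 :=
            pow_le_pow_left₀ h3 h2 2
          have hB : ((n.choose k : ℝ)) ^ 2 * ((k.factorial : ℝ) * D k)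
              ≤ ((n.choose k : ℝ)) ^ 2 * ((k.factorial : ℝ) * (k.factorial : ℝ)) :=
            mul_le_mul_of_nonneg_left (mul_le_mul_of_nonneg_left h1 hkf) (sq_nonneg _)
          exact mul_le_mul hB h4 (sq_nonneg _) (by positivity)
      _ = ((n.choose k : ℝ) * (k.factorial : ℝ) * ((n - k).factorial : ℝ)) ^ 2
          * (2 ^ k * W n / (n.descFactorial k : ℝ)) ^ 2 := by ring
      _ = ((n.factorial : ℝ) * W n) ^ 2 * (4 ^ k / ((n.descFactorial k : ℝ)) ^ 2) := by
          rw [hfact]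
          rw [div_pow, mul_pow, mul_pow]
          rw [show ((2:ℝ) ^ k) ^ 2 = 4 ^ k by
            rw [← pow_mul, mul_comm k 2, pow_mul]; norm_num]
          ring
      _ = P ^ 2 * (4 ^ k / ((n.descFactorial k : ℝ)) ^ 2) := by rw [hP, Psi_one_eq]
  -- sum bound
  have hd2 : ∀ k ∈ Finset.Icc 2 n,
      (4:ℝ) ^ k / ((n.descFactorial k : ℝ)) ^ 2
        ≤ ((4:ℝ) ^ k / (((k - 2).factorial : ℝ)) ^ 2) / ((n.descFactorial 2 : ℝ)) ^ 2 := by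
    intro k hk
    rw [Finset.mem_Icc] at hk
    obtain ⟨hk2, hkn⟩ := hk
    have hlb := descFactorial_lb hk2 hkn
    have hd2pos : (0:ℝ) < (n.descFactorial 2 : ℝ) := by
      have : n.descFactorial 2 ≠ 0 := by
        rw [Ne, Nat.descFactorial_eq_zero_iff_lt]; omega
      exact_mod_cast Nat.pos_of_ne_zero this
    have hkfpos : (0:ℝ) < (((k - 2).factorial : ℝ)) := by
      exact_mod_cast (k - 2).factorial_pos
    have hcast : (((k - 2).factorial : ℝ)) * ((n.descFactorial 2 : ℝ))
        ≤ ((n.descFactorial k : ℝ)) := by exact_mod_cast hlb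
    rw [div_div, ← mul_pow]
    apply div_le_div_of_nonneg_left (by positivity)
    · positivity
    · exact pow_le_pow_left₀ (by positivity) hcast 2
  have hratio : T n / P ^ 2 - 1 = S / P ^ 2 := by
    rw [hsplit, add_div, div_self (ne_of_gt hP2)]
    ring
  rw [hratio, abs_of_nonneg (div_nonneg hS_nonneg hP2.le)]
  rcases eq_or_lt_of_le hn with h1 | hn2'
  · -- n = 1
    subst h1
    have hS0 : S = 0 := by
      rw [hS_eq]
      simp
    rw [hS0, zero_div]
    positivity
  · have hn2 : 2 ≤ n := hn2'
    have hd2pos : (0:ℝ) < (n.descFactorial 2 : ℝ) := by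
      have : n.descFactorial 2 ≠ 0 := by
        rw [Ne, Nat.descFactorial_eq_zero_iff_lt]; omega
      exact_mod_cast Nat.pos_of_ne_zero this
    have hSb : S ≤ P ^ 2 * (16 * Real.exp 4 / ((n.descFactorial 2 : ℝ)) ^ 2) := by
      calc S ≤ ∑ k ∈ Finset.Icc 2 n, P ^ 2 * (4 ^ k / ((n.descFactorial k : ℝ)) ^ 2) := by
            rw [hS_eq]; exact Finset.sum_le_sum hterm
        _ ≤ ∑ k ∈ Finset.Icc 2 n,
            P ^ 2 * (((4:ℝ) ^ k / (((k - 2).factorial : ℝ)) ^ 2) / ((n.descFactorial 2 : ℝ)) ^ 2) := by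
            refine Finset.sum_le_sum fun k hk => ?_
            exact mul_le_mul_of_nonneg_left (hd2 k hk) (le_of_lt hP2)
        _ = P ^ 2 / ((n.descFactorial 2 : ℝ)) ^ 2
            * ∑ k ∈ Finset.Icc 2 n, ((4:ℝ) ^ k / (((k - 2).factorial : ℝ)) ^ 2) := by
            rw [Finset.mul_sum]
            exact Finset.sum_congr rfl fun k _ => by ring
        _ ≤ P ^ 2 / ((n.descFactorial 2 : ℝ)) ^ 2 * (16 * Real.exp 4) := by
            apply mul_le_mul_of_nonneg_left (sum_bound n) (by positivity)
        _ = P ^ 2 * (16 * Real.exp 4 / ((n.descFactorial 2 : ℝ)) ^ 2) := by ring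
    have hdesc : (n.descFactorial 2 : ℝ) = (n : ℝ) * ((n:ℝ) - 1) := by
      have hnd : n.descFactorial 2 = (n - 1) * n := by
        rw [show (2:ℕ) = 1 + 1 from rfl, Nat.descFactorial_succ, Nat.descFactorial_one]
      rw [hnd]
      push_cast [Nat.cast_sub (by omega : 1 ≤ n)]
      ring
    have hnR : (2:ℝ) ≤ (n:ℝ) := by exact_mod_cast hn2
    have hfinal : 16 * Real.exp 4 / ((n.descFactorial 2 : ℝ)) ^ 2
        ≤ 64 * Real.exp 4 * ((n : ℝ) ^ 4)⁻¹ := by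
      rw [hdesc]
      have hnpos : (0:ℝ) < (n:ℝ) := by linarith
      have h3 : (0:ℝ) < ((n:ℝ) * ((n:ℝ) - 1)) ^ 2 := by nlinarith
      rw [div_le_iff₀ h3, mul_assoc, inv_mul_eq_div]
      have h4 : (0:ℝ) < (n:ℝ)^4 := by positivity
      have key : (n:ℝ)^4 ≤ 4 * ((n:ℝ)*((n:ℝ)-1))^2 := by
        nlinarith [mul_nonneg (mul_nonneg (sq_nonneg (n:ℝ)) (by linarith : (0:ℝ) ≤ (n:ℝ) - 2))
          (by linarith : (0:ℝ) ≤ 3*(n:ℝ) - 2)]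
      have h5 : (1:ℝ)/4 ≤ ((n:ℝ)*((n:ℝ)-1))^2 / (n:ℝ)^4 := by
        rw [le_div_iff₀ h4]; nlinarith [key]
      have h6 := mul_le_mul_of_nonneg_left h5 (by positivity : (0:ℝ) ≤ 64 * Real.exp 4)
      linarith
    calc S / P ^ 2 ≤ 16 * Real.exp 4 / ((n.descFactorial 2 : ℝ)) ^ 2 := by
          rw [div_le_iff₀ hP2]
          calc S ≤ P ^ 2 * (16 * Real.exp 4 / ((n.descFactorial 2 : ℝ)) ^ 2) := hSb
            _ = 16 * Real.exp 4 / ((n.descFactorial 2 : ℝ)) ^ 2 * P ^ 2 := by ring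
      _ ≤ 64 * Real.exp 4 * ((n : ℝ) ^ 4)⁻¹ := hfinal
end
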